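/- arXiv:2206.12441 — 7 statements merged into one kernel-verified Lean document; each statement's English description precedes it below -/
import Mathlib

section
/- Let d ≥ 1 and let B and C be real symmetric d×d matrices such that C is positive definite and B − C is positive semidefinite (written B ⪰ C ≻ 0). Then for every nonzero x ∈ ℝ^d one has (xᵀ B x)/(xᵀ C x) ≤ det(B)/det(C); equivalently, sup_{x ≠ 0} (xᵀ B x)/(xᵀ C x) ≤ det(B)/det(C). -/
open Matrix

section Aux

/-- Key lemma: if `M` is a real symmetric matrix with `M - 1` positive semidefinite,
then `yᵀ M y ≤ det M * yᵀ y`. -/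
lemma key_quadratic_le_det {d : ℕ} {M : Matrix (Fin d) (Fin d) ℝ}
    (hM : M.IsHermitian) (h1 : (M - 1).PosSemidef) (y : Fin d → ℝ) :
    y ⬝ᵥ M.mulVec y ≤ M.det * (y ⬝ᵥ y) := by
  classical
  set μ := hM.eigenvalues with hμ
  have hμ1 : ∀ i, (1 : ℝ) ≤ μ i := by
    intro i
    have hv := hM.mulVec_eigenvectorBasis i
    set v : Fin d → ℝ := ⇑(hM.eigenvectorBasis i) with hvdef
    have hvv : v ⬝ᵥ v = 1 := by
      have hn := (hM.eigenvectorBasis.orthonormal).1 i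
      have h2 : @inner ℝ _ _ (hM.eigenvectorBasis i) (hM.eigenvectorBasis i) = (1 : ℝ) := by
        rw [real_inner_self_eq_norm_sq, hn]; norm_num
      rw [EuclideanSpace.inner_eq_star_dotProduct] at h2
      simpa using h2
    have hpos := h1.dotProduct_mulVec_nonneg v
    have hstar : star v = v := by simp
    rw [hstar, sub_mulVec, one_mulVec, dotProduct_sub, hv] at hpos
    have he : v ⬝ᵥ (μ i • v) = μ i * (v ⬝ᵥ v) := by
      simp [dotProduct_smul, smul_eq_mul, dotProduct, Finset.mul_sum, mul_comm, mul_left_comm]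
    rw [he, hvv, mul_one] at hpos
    linarith
  set U : Matrix (Fin d) (Fin d) ℝ := (hM.eigenvectorUnitary : Matrix (Fin d) (Fin d) ℝ) with hU
  have hUU : U * star U = 1 := (Matrix.mem_unitaryGroup_iff).mp hM.eigenvectorUnitary.2
  have hstarU : star U = Uᵀ := by
    rw [star_eq_conjTranspose, conjTranspose_eq_transpose_of_trivial]
  have hUUt : U * Uᵀ = 1 := by rw [← hstarU]; exact hUU
  have hspec : M = U * Matrix.diagonal μ * Uᵀ := by
    have := hM.spectral_theorem
    rw [Unitary.conjStarAlgAut_apply, ← hU, hstarU] at this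
    simpa using this
  set z : Fin d → ℝ := Uᵀ.mulVec y with hz
  have hyMy : y ⬝ᵥ M.mulVec y = z ⬝ᵥ (Matrix.diagonal μ).mulVec z := by
    rw [hz, hspec, ← mulVec_mulVec, ← mulVec_mulVec, dotProduct_mulVec y U,
      ← mulVec_transpose]
  have hyy : y ⬝ᵥ y = z ⬝ᵥ z := by
    rw [hz, dotProduct_mulVec (Uᵀ.mulVec y) Uᵀ y, vecMul_transpose, mulVec_mulVec, hUUt,
      one_mulVec]
  have hdet : M.det = ∏ i, μ i := by
    have := hM.det_eq_prod_eigenvalues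
    simpa using this
  rw [hyMy, hyy, hdet]
  have hzz : z ⬝ᵥ (Matrix.diagonal μ).mulVec z = ∑ i, μ i * (z i)^2 := by
    simp only [dotProduct, mulVec_diagonal]
    congr 1; funext i; ring
  have hzz2 : z ⬝ᵥ z = ∑ i, (z i)^2 := by
    simp only [dotProduct]; congr 1; funext i; ring
  rw [hzz, hzz2, Finset.mul_sum]
  apply Finset.sum_le_sum
  intro i _
  have hP : μ i ≤ ∏ j, μ j := by
    rw [← Finset.mul_prod_erase Finset.univ μ (Finset.mem_univ i)]
    have h1le : (1:ℝ) ≤ ∏ j ∈ Finset.univ.erase i, μ j := by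
      have := Finset.prod_le_prod (f := fun _ => (1:ℝ)) (g := μ)
        (fun _ _ => zero_le_one) (fun j _ => hμ1 j) (s := Finset.univ.erase i)
      simpa using this
    exact le_mul_of_one_le_right (le_trans zero_le_one (hμ1 i)) h1le
  have hsq : (0:ℝ) ≤ (z i)^2 := sq_nonneg _
  nlinarith

end Aux

/-- For real symmetric `d × d` matrices `B ⪰ C ≻ 0`, every nonzero `x`
satisfies `(xᵀ B x)/(xᵀ C x) ≤ det B / det C`. -/
theorem quadratic_form_ratio_le_det_ratio
    (d : ℕ) (hd : 1 ≤ d)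
    (B C : Matrix (Fin d) (Fin d) ℝ)
    (hBsymm : B.IsSymm) (hCsymm : C.IsSymm)
    (hC : C.PosDef) (hBC : (B - C).PosSemidef) :
    ∀ x : Fin d → ℝ, x ≠ 0 →
      (x ⬝ᵥ B.mulVec x) / (x ⬝ᵥ C.mulVec x) ≤ B.det / C.det := by
  classical
  intro x hx
  obtain ⟨S, hSS, hSh⟩ : ∃ S : Matrix (Fin d) (Fin d) ℝ, S * S = C ∧ S.IsHermitian := by
    open scoped MatrixOrder in
    exact ⟨CFC.sqrt C, CFC.sqrt_mul_sqrt_self C hC.posSemidef.nonneg,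
      (CFC.sqrt_nonneg C).posSemidef.1⟩
  have hdetC : 0 < C.det := hC.det_pos
  have hdetS : S.det ≠ 0 := by
    intro h
    rw [← hSS, det_mul, h, mul_zero] at hdetC
    exact lt_irrefl _ hdetC
  have hSunit : IsUnit S.det := isUnit_iff_ne_zero.mpr hdetS
  have hSinv : S * S⁻¹ = 1 := mul_nonsing_inv S hSunit
  have hinvS : S⁻¹ * S = 1 := nonsing_inv_mul S hSunit
  have hSinvh : (S⁻¹).IsHermitian := by
    unfold Matrix.IsHermitian
    rw [conjTranspose_nonsing_inv, hSh.eq]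
  have hSt : Sᵀ = S := by
    rw [← conjTranspose_eq_transpose_of_trivial, hSh.eq]
  have hSit : (S⁻¹)ᵀ = S⁻¹ := by
    rw [← conjTranspose_eq_transpose_of_trivial, hSinvh.eq]
  have hBh : B.IsHermitian := by
    unfold Matrix.IsHermitian
    rw [conjTranspose_eq_transpose_of_trivial]
    exact hBsymm
  have hMh : (S⁻¹ * B * S⁻¹).IsHermitian := by
    unfold Matrix.IsHermitian
    rw [conjTranspose_mul, conjTranspose_mul, hSinvh.eq, hBh.eq, mul_assoc]
  have hCinv : S⁻¹ * C * S⁻¹ = 1 := by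
    rw [← hSS]
    calc S⁻¹ * (S * S) * S⁻¹ = (S⁻¹ * S) * (S * S⁻¹) := by noncomm_ring
      _ = 1 := by rw [hinvS, hSinv, one_mul]
  have hM1 : (S⁻¹ * B * S⁻¹ - 1).PosSemidef := by
    have hMsub : S⁻¹ * B * S⁻¹ - 1 = (S⁻¹)ᴴ * (B - C) * S⁻¹ := by
      rw [hSinvh.eq, mul_sub, sub_mul, hCinv]
    rw [hMsub]
    exact hBC.conjTranspose_mul_mul_same _
  have hvmul : (S.mulVec x) ᵥ* S⁻¹ = x := by
    rw [← hSit, vecMul_transpose, mulVec_mulVec, hinvS, one_mulVec]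
  have hyy : (S.mulVec x) ⬝ᵥ (S.mulVec x) = x ⬝ᵥ C.mulVec x := by
    rw [← hSS, ← mulVec_mulVec, dotProduct_mulVec x S, ← hSt, vecMul_transpose, hSt]
  have hyMy : (S.mulVec x) ⬝ᵥ (S⁻¹ * B * S⁻¹).mulVec (S.mulVec x) = x ⬝ᵥ B.mulVec x := by
    have h1 : (S⁻¹ * B * S⁻¹).mulVec (S.mulVec x) = S⁻¹.mulVec (B.mulVec x) := by
      rw [mulVec_mulVec, mul_assoc, mul_assoc, hinvS, mul_one, ← mulVec_mulVec]
    rw [h1, dotProduct_mulVec, hvmul]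
  have hdetM : (S⁻¹ * B * S⁻¹).det = B.det / C.det := by
    rw [det_mul, det_mul, det_nonsing_inv, Ring.inverse_eq_inv, ← hSS, det_mul]
    field_simp
  have hyne : S.mulVec x ≠ 0 := by
    intro h
    apply hx
    have : S⁻¹.mulVec (S.mulVec x) = x := by
      rw [mulVec_mulVec, hinvS, one_mulVec]
    rw [← this, h, mulVec_zero]
  have hxCx : 0 < x ⬝ᵥ C.mulVec x := by
    rw [← hyy]
    rcases lt_or_eq_of_le (Finset.sum_nonneg fun i _ => mul_self_nonneg _ :
        (0:ℝ) ≤ (S.mulVec x) ⬝ᵥ (S.mulVec x)) with h | h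
    · exact h
    · exact absurd (dotProduct_self_eq_zero.mp h.symm) hyne
  rw [div_le_div_iff₀ hxCx hdetC]
  have hkey := key_quadratic_le_det hMh hM1 (S.mulVec x)
  rw [hyMy, hyy, hdetM] at hkey
  calc x ⬝ᵥ B.mulVec x * C.det ≤ (B.det / C.det * (x ⬝ᵥ C.mulVec x)) * C.det :=
        mul_le_mul_of_nonneg_right hkey hdetC.le
    _ = B.det * (x ⬝ᵥ C.mulVec x) := by field_simp
end

section
/- Let x_1, …, x_M ∈ ℝ^d satisfy ‖x_q‖₂ ≤ L for all q ∈ [M], and let λ > 0. Define D_{M+1} := λ I + ∑_{q=1}^{M} x_q x_qᵀ, where I is the d×d identity matrix. Then log( det(D_{M+1}) / det(λ I) ) ≤ d · log( 1 + M L² / (λ d) ). -/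
open Matrix Finset

lemma trace_eq_sum_eigs {n : Type*} [Fintype n] [DecidableEq n] {A : Matrix n n ℝ}
    (hA : A.IsHermitian) : A.trace = ∑ i, hA.eigenvalues i := by
  simpa using hA.trace_eq_sum_eigenvalues

lemma amgm_log {d : ℕ} (hd : 0 < d) (f : Fin d → ℝ) (hf : ∀ i, 0 < f i) :
    Real.log (∏ i, f i) ≤ d * Real.log ((∑ i, f i) / d) := by
  have hdR : (0:ℝ) < d := Nat.cast_pos.mpr hd
  have h := Real.geom_mean_le_arith_mean_weighted Finset.univ (fun _ => (d:ℝ)⁻¹) f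
    (fun i _ => by positivity) (by simp [Finset.card_univ]; field_simp)
    (fun i _ => (hf i).le)
  have hP : (0:ℝ) < ∏ i, f i ^ ((d:ℝ)⁻¹) := by
    apply Finset.prod_pos; intro i _; exact Real.rpow_pos_of_pos (hf i) _
  have hlog := Real.log_le_log hP h
  have hL : Real.log (∏ i, f i ^ ((d:ℝ)⁻¹)) = (d:ℝ)⁻¹ * Real.log (∏ i, f i) := by
    rw [Real.log_prod (fun i _ => (Real.rpow_pos_of_pos (hf i) _).ne')]
    rw [Real.log_prod (fun i _ => (hf i).ne')]
    rw [Finset.mul_sum]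
    exact Finset.sum_congr rfl fun i _ => Real.log_rpow (hf i) _
  have hR : ∑ i, (d:ℝ)⁻¹ * f i = (∑ i, f i) / d := by
    rw [← Finset.mul_sum]; ring
  rw [hL, hR] at hlog
  calc Real.log (∏ i, f i) = d * ((d:ℝ)⁻¹ * Real.log (∏ i, f i)) := by field_simp
  _ ≤ d * Real.log ((∑ i, f i) / d) := by
      exact mul_le_mul_of_nonneg_left hlog hdR.le

/-- determinant lemma, log-det bound. If `‖x_q‖₂ ≤ L` for `q ∈ [M]` and
`λ > 0`, then with `D_{M+1} = λ I + ∑_q x_q x_qᵀ`,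
`log(det D_{M+1} / det (λ I)) ≤ d log(1 + M L² / (λ d))`. -/
theorem log_det_ratio_le
    (d M : ℕ) (L lam : ℝ) (hlam : 0 < lam)
    (x : Fin M → Fin d → ℝ)
    (hx : ∀ q : Fin M, Real.sqrt (x q ⬝ᵥ x q) ≤ L) :
    Real.log
        ((lam • (1 : Matrix (Fin d) (Fin d) ℝ) + ∑ q : Fin M, vecMulVec (x q) (x q)).det
          / (lam • (1 : Matrix (Fin d) (Fin d) ℝ)).det)
      ≤ d * Real.log (1 + M * L ^ 2 / (lam * d)) := by

  rcases Nat.eq_zero_or_pos d with hd | hd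
  · subst hd
    simp [Matrix.det_isEmpty]
  set A : Matrix (Fin d) (Fin d) ℝ :=
    lam • (1 : Matrix (Fin d) (Fin d) ℝ) + ∑ q : Fin M, vecMulVec (x q) (x q) with hA
  have hdR : (0:ℝ) < d := Nat.cast_pos.mpr hd
  have h1 : (lam • (1 : Matrix (Fin d) (Fin d) ℝ)).PosDef := by
    rw [Matrix.smul_one_eq_diagonal]
    exact Matrix.PosDef.diagonal (fun i => hlam)
  have hmv : ∀ (w v : Fin d → ℝ), vecMulVec w w *ᵥ v = (w ⬝ᵥ v) • w := by
    intro w v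
    ext i
    simp [Matrix.mulVec, Matrix.vecMulVec_apply, dotProduct, Finset.mul_sum, mul_assoc,
      mul_comm, mul_left_comm]
  have hquad : ∀ (w v : Fin d → ℝ), v ⬝ᵥ (vecMulVec w w *ᵥ v) = (w ⬝ᵥ v)^2 := by
    intro w v
    rw [hmv, dotProduct_smul, dotProduct_comm, smul_eq_mul, pow_two]
  have hsummv : ∀ v : Fin d → ℝ,
      (∑ q : Fin M, vecMulVec (x q) (x q)) *ᵥ v = ∑ q, (vecMulVec (x q) (x q) *ᵥ v) := by
    intro v
    ext i
    simp only [Matrix.mulVec, dotProduct, Matrix.sum_apply, Finset.sum_mul, Finset.sum_apply]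
    rw [Finset.sum_comm]
  have h2 : (∑ q : Fin M, vecMulVec (x q) (x q)).PosSemidef := by
    rw [Matrix.posSemidef_iff_dotProduct_mulVec]
    constructor
    · unfold Matrix.IsHermitian
      ext i j
      simp [Matrix.conjTranspose_apply, Matrix.sum_apply, Matrix.vecMulVec_apply, mul_comm]
    · intro v
      have hst : star v = v := rfl
      rw [hst, hsummv]
      have hsplit : v ⬝ᵥ (∑ q, vecMulVec (x q) (x q) *ᵥ v)
          = ∑ q, v ⬝ᵥ (vecMulVec (x q) (x q) *ᵥ v) := by
        simp only [dotProduct, Finset.sum_apply, Finset.mul_sum]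
        rw [Finset.sum_comm]
      rw [hsplit]
      refine Finset.sum_nonneg fun q _ => ?_
      rw [hquad]
      positivity
  have hpos : A.PosDef := h1.add_posSemidef h2
  have hherm : A.IsHermitian := hpos.1
  have heigpos : ∀ i, 0 < hherm.eigenvalues i := hpos.eigenvalues_pos
  have hdet : A.det = ∏ i, hherm.eigenvalues i := by
    simpa using hherm.det_eq_prod_eigenvalues
  have hdetpos : 0 < A.det := hpos.det_pos
  have htr : A.trace = lam * d + ∑ q, (x q ⬝ᵥ x q) := by
    have hterm : ∀ q : Fin M, (vecMulVec (x q) (x q)).trace = x q ⬝ᵥ x q := fun q => by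
      simp [Matrix.trace, Matrix.diag, Matrix.vecMulVec_apply, dotProduct]
    rw [hA, Matrix.trace_add, Matrix.trace_smul, Matrix.trace_one, Matrix.trace_sum,
      Finset.sum_congr rfl (fun q _ => hterm q)]
    simp [Fintype.card_fin, mul_comm]
  have hxq : ∀ q, x q ⬝ᵥ x q ≤ L ^ 2 := by
    intro q
    have h0 : 0 ≤ x q ⬝ᵥ x q := Finset.sum_nonneg fun i _ => mul_self_nonneg (x q i)
    calc x q ⬝ᵥ x q = Real.sqrt (x q ⬝ᵥ x q) ^ 2 := (Real.sq_sqrt h0).symm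
    _ ≤ L ^ 2 := by
        have h3 := hx q
        have h4 := Real.sqrt_nonneg (x q ⬝ᵥ x q)
        nlinarith
  have htrle : A.trace ≤ lam * d + M * L ^ 2 := by
    rw [htr]
    gcongr
    calc ∑ q, (x q ⬝ᵥ x q) ≤ ∑ _q : Fin M, L ^ 2 := Finset.sum_le_sum fun q _ => hxq q
    _ = M * L ^ 2 := by simp [mul_comm]
  have hne : Nonempty (Fin d) := Fin.pos_iff_nonempty.mp hd
  have htrpos : 0 < A.trace := by
    rw [trace_eq_sum_eigs hherm]
    exact Finset.sum_pos (fun i _ => heigpos i) Finset.univ_nonempty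
  have hamgm : Real.log A.det ≤ d * Real.log (A.trace / d) := by
    rw [hdet, trace_eq_sum_eigs hherm]
    exact amgm_log hd _ heigpos
  have hdetl : (lam • (1 : Matrix (Fin d) (Fin d) ℝ)).det = lam ^ d := by
    simp [Matrix.det_smul, Fintype.card_fin]
  rw [hdetl, Real.log_div hdetpos.ne' (by positivity), Real.log_pow]
  have hkey : Real.log (A.trace / d) - Real.log lam = Real.log (A.trace / (d * lam)) := by
    rw [← Real.log_div (by positivity) hlam.ne', div_div]
  have hle : A.trace / (↑d * lam) ≤ 1 + ↑M * L ^ 2 / (lam * ↑d) := by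
    have h9 : 1 + ↑M * L ^ 2 / (lam * ↑d) = (lam * ↑d + ↑M * L ^ 2) / (lam * ↑d) := by
      field_simp
    rw [h9, mul_comm (↑d : ℝ) lam]
    gcongr
  calc Real.log A.det - ↑d * Real.log lam
      ≤ ↑d * Real.log (A.trace / d) - ↑d * Real.log lam := by linarith
  _ = ↑d * Real.log (A.trace / (↑d * lam)) := by rw [← hkey]; ring
  _ ≤ ↑d * Real.log (1 + ↑M * L ^ 2 / (lam * ↑d)) := by
      refine mul_le_mul_of_nonneg_left (Real.log_le_log (by positivity) hle) hdR.le
end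

section
/- Fix N, H ∈ ℕ, λ > 0, L > 0 and d̃ ∈ ℕ. Let x_{n,h} ∈ ℝ^{d̃} for n ∈ [N], h ∈ [H] satisfy ‖x_{n,h}‖₂ ≤ L, and let D_{n,h} ∈ ℝ^{d̃×d̃} be symmetric matrices for n ∈ [N], h ∈ [H] such that λI ⪯ D_{n,h} for all (n,h), and D_{n,h} ⪯ D_{n',h'} whenever (n,h) ≤ (n',h') in the lexicographic order (i.e. n < n', or n = n' and h ≤ h'). Define D_1 := λI and D_n := D_{n−1, H} for 2 ≤ n ≤ N+1. Then ∑_{n=1}^{N} ∑_{h=1}^{H} ‖x_{n,h}‖_{D_n^{-1}} ≤ 2 ∑_{n=1}^{N} ∑_{h=1}^{H} ‖x_{n,h}‖_{D_{n,h}^{-1}} + (2HL/√λ) · log( det(D_{N+1}) / det(λI) ). -/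
open Matrix Finset

/-- The "episode-start" matrices: `D_1 = λ I` (index `0` here) and, for `n ≥ 1` (representing
the paper's episode `n+1`), `D_{n+1} = D_{n, H}`, i.e. `D (n-1) (H-1)` in `0`-indexed form. -/
noncomputable def episodeMatrix (dt H : ℕ) (lam : ℝ)
    (D : ℕ → ℕ → Matrix (Fin dt) (Fin dt) ℝ) : ℕ → Matrix (Fin dt) (Fin dt) ℝ :=
  fun n => if n = 0 then lam • (1 : Matrix (Fin dt) (Fin dt) ℝ) else D (n - 1) (H - 1)

namespace LazyAux
variable {d : ℕ}

lemma psd_quad {M : Matrix (Fin d) (Fin d) ℝ} (hM : M.PosSemidef) (x : Fin d → ℝ) :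
    0 ≤ x ⬝ᵥ M *ᵥ x := by simpa using hM.dotProduct_mulVec_nonneg x

lemma pd_inv_mul {A : Matrix (Fin d) (Fin d) ℝ} (hA : A.PosDef) : A * A⁻¹ = 1 :=
  A.mul_nonsing_inv (isUnit_iff_ne_zero.mpr hA.det_pos.ne')

lemma symm_shift {A : Matrix (Fin d) (Fin d) ℝ} (hA : Aᵀ = A) (y z : Fin d → ℝ) :
    z ⬝ᵥ A *ᵥ y = (A *ᵥ z) ⬝ᵥ y := by
  rw [dotProduct_mulVec]; congr 1
  nth_rewrite 1 [← hA]
  rw [vecMul_transpose]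

lemma herm_transpose {A : Matrix (Fin d) (Fin d) ℝ} (hA : A.IsHermitian) : Aᵀ = A := by
  have := hA.eq
  rwa [conjTranspose_eq_transpose_of_trivial] at this

/-- variational bound: `2 xᵀy - yᵀAy ≤ xᵀA⁻¹x` for A PD. -/
lemma variational {A : Matrix (Fin d) (Fin d) ℝ} (hA : A.PosDef) (x y : Fin d → ℝ) :
    2 * (x ⬝ᵥ y) - y ⬝ᵥ A *ᵥ y ≤ x ⬝ᵥ A⁻¹ *ᵥ x := by
  set z := A⁻¹ *ᵥ x with hz
  have h0 : 0 ≤ (y - z) ⬝ᵥ A *ᵥ (y - z) := psd_quad hA.posSemidef _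
  have hAt : Aᵀ = A := herm_transpose hA.isHermitian
  have e1 : A *ᵥ z = x := by rw [hz, mulVec_mulVec, pd_inv_mul hA, one_mulVec]
  have expand : (y - z) ⬝ᵥ A *ᵥ (y - z)
      = y ⬝ᵥ A *ᵥ y - y ⬝ᵥ x - x ⬝ᵥ y + x ⬝ᵥ A⁻¹ *ᵥ x := by
    rw [mulVec_sub, dotProduct_sub, sub_dotProduct, sub_dotProduct]
    rw [e1, symm_shift hAt y z, e1, dotProduct_comm z x, ← hz]
    ring
  rw [expand] at h0
  rw [dotProduct_comm y x] at h0
  linarith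

/-- anti-monotonicity of inverse: if `A ⪯ B` (both PD) then `B⁻¹ ⪯ A⁻¹`. -/
lemma inv_anti {A B : Matrix (Fin d) (Fin d) ℝ} (hA : A.PosDef) (hB : B.PosDef)
    (h : (B - A).PosSemidef) : (A⁻¹ - B⁻¹).PosSemidef := by
  apply Matrix.PosSemidef.of_dotProduct_mulVec_nonneg
  · exact ((hA.inv.isHermitian).sub (hB.inv.isHermitian))
  · intro x
    have hx : (x : Fin d → ℝ) = star x := rfl
    simp only [← hx, sub_mulVec, dotProduct_sub]
    rw [sub_nonneg]
    have hv := variational hA x (B⁻¹ *ᵥ x)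
    have e1 : B *ᵥ (B⁻¹ *ᵥ x) = x := by rw [mulVec_mulVec, pd_inv_mul hB, one_mulVec]
    have hq : 0 ≤ (B⁻¹ *ᵥ x) ⬝ᵥ (B - A) *ᵥ (B⁻¹ *ᵥ x) := psd_quad h _
    have hBy : (B⁻¹ *ᵥ x) ⬝ᵥ B *ᵥ (B⁻¹ *ᵥ x) = (B⁻¹ *ᵥ x) ⬝ᵥ x := by rw [e1]
    rw [sub_mulVec, dotProduct_sub] at hq
    have hyx : (B⁻¹ *ᵥ x) ⬝ᵥ x = x ⬝ᵥ (B⁻¹ *ᵥ x) := dotProduct_comm _ _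
    nlinarith [hv]

lemma dp_self_pos {v : Fin d → ℝ} (hv : v ≠ 0) : 0 < v ⬝ᵥ v := by
  have h1 : 0 ≤ v ⬝ᵥ v := Finset.sum_nonneg fun i _ => mul_self_nonneg _
  rcases h1.lt_or_eq with h' | h'
  · exact h'
  · exact absurd ((dotProduct_self_eq_zero).mp h'.symm) hv

lemma one_le_prod_real {f : Fin d → ℝ} (hf : ∀ i, 1 ≤ f i) : 1 ≤ ∏ i, f i := by
  calc (1:ℝ) = ∏ _i : Fin d, 1 := by simp
  _ ≤ ∏ i, f i := Finset.prod_le_prod (fun _ _ => zero_le_one) (fun i _ => hf i)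

lemma single_le_prod_real {f : Fin d → ℝ} (hf : ∀ i, 1 ≤ f i) (i : Fin d) :
    f i ≤ ∏ j, f j := by
  rw [← Finset.mul_prod_erase Finset.univ f (Finset.mem_univ i)]
  have h1 : (1:ℝ) ≤ ∏ j ∈ Finset.univ.erase i, f j := by
    calc (1:ℝ) = ∏ _j ∈ Finset.univ.erase i, 1 := by simp
    _ ≤ _ := Finset.prod_le_prod (fun _ _ => zero_le_one) (fun j _ => hf j)
  nlinarith [le_trans zero_le_one (hf i)]

lemma eig_ge_one {M : Matrix (Fin d) (Fin d) ℝ} (hM : M.IsHermitian)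
    (h : (M - 1).PosSemidef) (i : Fin d) : 1 ≤ hM.eigenvalues i := by
  set v : Fin d → ℝ := ⇑(hM.eigenvectorBasis i) with hv
  have hMv : M *ᵥ v = hM.eigenvalues i • v := hM.mulVec_eigenvectorBasis i
  have hvn : v ≠ 0 := by
    intro h0
    have := hM.eigenvectorBasis.orthonormal.1 i
    rw [show (hM.eigenvectorBasis i) = 0 from by ext j; exact congrFun h0 j] at this
    simp at this
  have hvv : 0 < v ⬝ᵥ v := dp_self_pos hvn
  have h2 : 0 ≤ v ⬝ᵥ (M - 1) *ᵥ v := by simpa using h.dotProduct_mulVec_nonneg v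
  rw [sub_mulVec, dotProduct_sub, hMv, one_mulVec, dotProduct_smul, smul_eq_mul] at h2
  nlinarith

lemma det_eq_prod {M : Matrix (Fin d) (Fin d) ℝ} (hM : M.IsHermitian) :
    M.det = ∏ i, hM.eigenvalues i := by
  simpa using hM.det_eq_prod_eigenvalues

lemma one_le_det {M : Matrix (Fin d) (Fin d) ℝ} (hM : M.IsHermitian)
    (h : (M - 1).PosSemidef) : 1 ≤ M.det := by
  rw [det_eq_prod hM]
  exact one_le_prod_real (eig_ge_one hM h)

lemma quad_le_det {M : Matrix (Fin d) (Fin d) ℝ} (hM : M.IsHermitian)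
    (h : (M - 1).PosSemidef) (x : Fin d → ℝ) :
    x ⬝ᵥ M *ᵥ x ≤ M.det * (x ⬝ᵥ x) := by
  set U : Matrix (Fin d) (Fin d) ℝ := (hM.eigenvectorUnitary : Matrix (Fin d) (Fin d) ℝ) with hU
  have hUU : U * Uᵀ = 1 := by
    have := (Matrix.mem_unitaryGroup_iff).mp hM.eigenvectorUnitary.2
    simpa [star_eq_conjTranspose, conjTranspose_eq_transpose_of_trivial] using this
  have hspec : M = U * diagonal hM.eigenvalues * Uᵀ := by
    have := hM.spectral_theorem
    simpa [star_eq_conjTranspose, conjTranspose_eq_transpose_of_trivial] using this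
  have hxx : x ⬝ᵥ x = (Uᵀ *ᵥ x) ⬝ᵥ (Uᵀ *ᵥ x) := by
    rw [dotProduct_mulVec, vecMul_transpose, mulVec_mulVec, hUU, one_mulVec]
  have e : x ⬝ᵥ M *ᵥ x = (Uᵀ *ᵥ x) ⬝ᵥ (diagonal hM.eigenvalues *ᵥ (Uᵀ *ᵥ x)) := by
    conv_lhs => rw [hspec]
    rw [← mulVec_mulVec, ← mulVec_mulVec, dotProduct_mulVec, ← mulVec_transpose]
  set z : Fin d → ℝ := Uᵀ *ᵥ x with hz
  have ediag : z ⬝ᵥ (diagonal hM.eigenvalues *ᵥ z) = ∑ i, hM.eigenvalues i * (z i * z i) := by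
    simp only [dotProduct, mulVec_diagonal]
    exact Finset.sum_congr rfl fun i _ => by ring
  rw [e, ediag, hxx]
  have hzz : (z ⬝ᵥ z) = ∑ i, z i * z i := rfl
  rw [hzz, Finset.mul_sum]
  refine Finset.sum_le_sum fun i _ => ?_
  have h1 : hM.eigenvalues i ≤ M.det := by
    rw [det_eq_prod hM]; exact single_le_prod_real (eig_ge_one hM h) i
  nlinarith [mul_self_nonneg (z i)]

open scoped MatrixOrder in
/-- facts about the square root of a positive definite real matrix -/
lemma sqrt_facts {B : Matrix (Fin d) (Fin d) ℝ} (hB : B.PosDef) :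
    ∃ S : Matrix (Fin d) (Fin d) ℝ, Sᵀ = S ∧ S * S = B ∧ IsUnit S.det := by
  refine ⟨CFC.sqrt B, herm_transpose (CFC.sqrt_nonneg B).posSemidef.isHermitian,
    CFC.sqrt_mul_sqrt_self B hB.posSemidef.nonneg, ?_⟩
  have h2 : (CFC.sqrt B).det * (CFC.sqrt B).det = B.det := by
    rw [← det_mul, CFC.sqrt_mul_sqrt_self B hB.posSemidef.nonneg]
  have : (CFC.sqrt B).det ≠ 0 := fun h0 => by
    rw [h0, mul_zero] at h2; exact hB.det_pos.ne h2
  exact isUnit_iff_ne_zero.mpr this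

/-- the conjugated matrix `M = S A⁻¹ S` with `S = √B`. -/
lemma conj_facts {A B S : Matrix (Fin d) (Fin d) ℝ} (hA : A.PosDef) (hB : B.PosDef)
    (h : (B - A).PosSemidef) (hSt : Sᵀ = S) (hSS : S * S = B) (hSu : IsUnit S.det) :
    (S * A⁻¹ * S).IsHermitian ∧ ((S * A⁻¹ * S) - 1).PosSemidef ∧
      (S * A⁻¹ * S).det = B.det / A.det := by
  have hSh : Sᴴ = S := by rw [conjTranspose_eq_transpose_of_trivial, hSt]
  have hAinv : A⁻¹ᴴ = A⁻¹ := hA.inv.isHermitian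
  have hSBS : S * B⁻¹ * S = 1 := by
    rw [← hSS, Matrix.mul_inv_rev, ← Matrix.mul_assoc, Matrix.mul_assoc (S * S⁻¹),
      S.nonsing_inv_mul hSu, Matrix.mul_one, S.mul_nonsing_inv hSu]
  refine ⟨?_, ?_, ?_⟩
  · unfold Matrix.IsHermitian
    rw [conjTranspose_mul, conjTranspose_mul, hSh, hAinv, Matrix.mul_assoc]
  · have hpsd : (Sᴴ * (A⁻¹ - B⁻¹) * S).PosSemidef :=
      (inv_anti hA hB h).conjTranspose_mul_mul_same S
    have : Sᴴ * (A⁻¹ - B⁻¹) * S = (S * A⁻¹ * S) - 1 := by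
      rw [hSh, Matrix.mul_sub, Matrix.sub_mul, hSBS]
    rwa [this] at hpsd
  · rw [det_mul, det_mul, A.det_nonsing_inv, Ring.inverse_eq_inv']
    have hdetB : S.det * S.det = B.det := by rw [← det_mul, hSS]
    rw [div_eq_mul_inv, ← hdetB]; ring

/-- determinant monotonicity. -/
lemma det_le_det {A B : Matrix (Fin d) (Fin d) ℝ} (hA : A.PosDef) (hB : B.PosDef)
    (h : (B - A).PosSemidef) : A.det ≤ B.det := by
  obtain ⟨S, hSt, hSS, hSu⟩ := sqrt_facts hB
  obtain ⟨hM, hM1, hMdet⟩ := conj_facts hA hB h hSt hSS hSu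
  have := one_le_det hM hM1
  rw [hMdet] at this
  exact (one_le_div hA.det_pos).mp this

/-- key quadratic comparison: `xᵀA⁻¹x ≤ (det B / det A) xᵀB⁻¹x` when `A ⪯ B`. -/
lemma key_quad {A B : Matrix (Fin d) (Fin d) ℝ} (hA : A.PosDef) (hB : B.PosDef)
    (h : (B - A).PosSemidef) (x : Fin d → ℝ) :
    x ⬝ᵥ A⁻¹ *ᵥ x ≤ (B.det / A.det) * (x ⬝ᵥ B⁻¹ *ᵥ x) := by
  obtain ⟨S, hSt, hSS, hSu⟩ := sqrt_facts hB
  obtain ⟨hM, hM1, hMdet⟩ := conj_facts hA hB h hSt hSS hSu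
  set y : Fin d → ℝ := S⁻¹ *ᵥ x with hy
  have e1 : S *ᵥ y = x := by rw [hy, mulVec_mulVec, S.mul_nonsing_inv hSu, one_mulVec]
  have eA : x ⬝ᵥ A⁻¹ *ᵥ x = y ⬝ᵥ (S * A⁻¹ * S) *ᵥ y := by
    rw [← mulVec_mulVec, ← mulVec_mulVec, symm_shift hSt _ y, e1]
  have hSit : (S⁻¹)ᵀ = S⁻¹ := by rw [transpose_nonsing_inv, hSt]
  have eB : x ⬝ᵥ B⁻¹ *ᵥ x = y ⬝ᵥ y := by
    rw [← hSS, Matrix.mul_inv_rev, ← mulVec_mulVec, symm_shift hSit _ x, ← hy]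
  rw [eA, eB, ← hMdet]
  exact quad_le_det hM hM1 y

lemma smul_one_posDef {lam : ℝ} (hlam : 0 < lam) :
    (lam • (1 : Matrix (Fin d) (Fin d) ℝ)).PosDef := by
  rw [smul_one_eq_diagonal]
  exact (Matrix.posDef_diagonal_iff).mpr fun _ => hlam

lemma pd_of_lower {lam : ℝ} (hlam : 0 < lam) {A : Matrix (Fin d) (Fin d) ℝ}
    (h : (A - lam • (1 : Matrix (Fin d) (Fin d) ℝ)).PosSemidef) : A.PosDef := by
  have := (smul_one_posDef hlam).add_posSemidef h
  rwa [show lam • (1 : Matrix (Fin d) (Fin d) ℝ) + (A - lam • 1) = A from by abel] at this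

lemma upper_quad {lam : ℝ} (hlam : 0 < lam) {A : Matrix (Fin d) (Fin d) ℝ}
    (h : (A - lam • (1 : Matrix (Fin d) (Fin d) ℝ)).PosSemidef) (x : Fin d → ℝ) :
    x ⬝ᵥ A⁻¹ *ᵥ x ≤ lam⁻¹ * (x ⬝ᵥ x) := by
  have hA : A.PosDef := pd_of_lower hlam h
  have hanti := inv_anti (smul_one_posDef hlam) hA h
  have hinv : (lam • (1 : Matrix (Fin d) (Fin d) ℝ))⁻¹ = lam⁻¹ • 1 := by
    apply Matrix.inv_eq_right_inv
    rw [smul_mul_assoc, Matrix.mul_smul, Matrix.one_mul, smul_smul,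
      mul_inv_cancel₀ hlam.ne', one_smul]
  rw [hinv] at hanti
  have h0 : 0 ≤ x ⬝ᵥ (lam⁻¹ • (1 : Matrix (Fin d) (Fin d) ℝ) - A⁻¹) *ᵥ x := psd_quad hanti x
  rw [sub_mulVec, dotProduct_sub, sub_nonneg, smul_mulVec, one_mulVec,
    dotProduct_smul, smul_eq_mul] at h0
  exact h0

lemma sqrt_key {A B : Matrix (Fin d) (Fin d) ℝ} (hA : A.PosDef) (hB : B.PosDef)
    (h : (B - A).PosSemidef) (hdet : B.det ≤ 2 * A.det) (x : Fin d → ℝ) :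
    Real.sqrt (x ⬝ᵥ A⁻¹ *ᵥ x) ≤ 2 * Real.sqrt (x ⬝ᵥ B⁻¹ *ᵥ x) := by
  have hqB : 0 ≤ x ⬝ᵥ B⁻¹ *ᵥ x := psd_quad hB.inv.posSemidef x
  have hr : B.det / A.det ≤ 2 := (div_le_iff₀ hA.det_pos).mpr (by linarith)
  have h4 : x ⬝ᵥ A⁻¹ *ᵥ x ≤ 4 * (x ⬝ᵥ B⁻¹ *ᵥ x) := by
    have := key_quad hA hB h x
    have hrr : (B.det / A.det) * (x ⬝ᵥ B⁻¹ *ᵥ x) ≤ 2 * (x ⬝ᵥ B⁻¹ *ᵥ x) :=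
      mul_le_mul_of_nonneg_right hr hqB
    linarith
  calc Real.sqrt (x ⬝ᵥ A⁻¹ *ᵥ x) ≤ Real.sqrt (4 * (x ⬝ᵥ B⁻¹ *ᵥ x)) := Real.sqrt_le_sqrt h4
  _ = 2 * Real.sqrt (x ⬝ᵥ B⁻¹ *ᵥ x) := by
      rw [show (4:ℝ) = 2^2 by norm_num, Real.sqrt_mul (by positivity), Real.sqrt_sq (by norm_num : (0:ℝ) ≤ 2)]

lemma sqrt_upper {lam L : ℝ} (hlam : 0 < lam) {A : Matrix (Fin d) (Fin d) ℝ}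
    (h : (A - lam • (1 : Matrix (Fin d) (Fin d) ℝ)).PosSemidef) {x : Fin d → ℝ}
    (hx : Real.sqrt (x ⬝ᵥ x) ≤ L) :
    Real.sqrt (x ⬝ᵥ A⁻¹ *ᵥ x) ≤ L / Real.sqrt lam := by
  have h1 : x ⬝ᵥ A⁻¹ *ᵥ x ≤ lam⁻¹ * (x ⬝ᵥ x) := upper_quad hlam h x
  calc Real.sqrt (x ⬝ᵥ A⁻¹ *ᵥ x) ≤ Real.sqrt (lam⁻¹ * (x ⬝ᵥ x)) := Real.sqrt_le_sqrt h1
  _ = (Real.sqrt lam)⁻¹ * Real.sqrt (x ⬝ᵥ x) := by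
      rw [Real.sqrt_mul (by positivity), Real.sqrt_inv]
  _ ≤ (Real.sqrt lam)⁻¹ * L := by
      exact mul_le_mul_of_nonneg_left hx (by positivity)
  _ = L / Real.sqrt lam := by rw [inv_mul_eq_div]

end LazyAux

/-- lazy determinant lemma. Episodes `n ∈ [N]` and stages `h ∈ [H]` are
`0`-indexed: `x n h` and `D n h` for `n < N`, `h < H`. The matrices are symmetric, satisfy
`λ I ⪯ D_{n,h}`, and are monotone in the lexicographic order. Then
`∑_{n,h} ‖x_{n,h}‖_{D_n⁻¹} ≤ 2 ∑_{n,h} ‖x_{n,h}‖_{D_{n,h}⁻¹}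
  + (2HL/√λ) log(det D_{N+1} / det (λ I))`. -/
theorem lazy_determinant_lemma
    (N H dt : ℕ) (hH : 0 < H) (lam L : ℝ) (hlam : 0 < lam) (hL : 0 < L)
    (x : ℕ → ℕ → Fin dt → ℝ)
    (hx : ∀ n h, n < N → h < H → Real.sqrt (x n h ⬝ᵥ x n h) ≤ L)
    (D : ℕ → ℕ → Matrix (Fin dt) (Fin dt) ℝ)
    (hsymm : ∀ n h, n < N → h < H → (D n h).IsSymm)
    (hlow : ∀ n h, n < N → h < H →
      (D n h - lam • (1 : Matrix (Fin dt) (Fin dt) ℝ)).PosSemidef)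
    (hmono : ∀ n h n' h', n < N → h < H → n' < N → h' < H →
      (n < n' ∨ (n = n' ∧ h ≤ h')) → (D n' h' - D n h).PosSemidef) :
    ∑ n ∈ Finset.range N, ∑ h ∈ Finset.range H,
        Real.sqrt (x n h ⬝ᵥ ((episodeMatrix dt H lam D n)⁻¹).mulVec (x n h))
      ≤ 2 * ∑ n ∈ Finset.range N, ∑ h ∈ Finset.range H,
            Real.sqrt (x n h ⬝ᵥ ((D n h)⁻¹).mulVec (x n h))
        + (2 * H * L / Real.sqrt lam) *
            Real.log ((episodeMatrix dt H lam D N).det /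
              (lam • (1 : Matrix (Fin dt) (Fin dt) ℝ)).det) := by
  classical
  set E := episodeMatrix dt H lam D with hE
  have hE0 : E 0 = lam • (1 : Matrix (Fin dt) (Fin dt) ℝ) := by simp [hE, episodeMatrix]
  have hEs : ∀ n : ℕ, E (n + 1) = D n (H - 1) := fun n => by simp [hE, episodeMatrix]
  have hH1 : H - 1 < H := Nat.sub_lt hH one_pos
  have hDpd : ∀ n h, n < N → h < H → (D n h).PosDef := fun n h hn hh =>
    LazyAux.pd_of_lower hlam (hlow n h hn hh)
  have hElow : ∀ n, n ≤ N →
      (E n - lam • (1 : Matrix (Fin dt) (Fin dt) ℝ)).PosSemidef := by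
    intro n hn
    match n with
    | 0 => rw [hE0, sub_self]; exact Matrix.PosSemidef.zero
    | (m+1) => rw [hEs m]; exact hlow m (H-1) (Nat.lt_of_succ_le hn) hH1
  have hEpd : ∀ n, n ≤ N → (E n).PosDef := fun n hn =>
    LazyAux.pd_of_lower hlam (hElow n hn)
  have hEleD : ∀ n h, n < N → h < H → (D n h - E n).PosSemidef := by
    intro n h hn hh
    match n with
    | 0 => rw [hE0]; exact hlow 0 h hn hh
    | (m+1) => rw [hEs m]
               exact hmono m (H-1) (m+1) h (Nat.lt_of_succ_lt hn) hH1 hn hh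
                 (Or.inl (Nat.lt_succ_self m))
  have hDleE : ∀ n h, n < N → h < H → (E (n+1) - D n h).PosSemidef := by
    intro n h hn hh
    rw [hEs n]
    exact hmono n h n (H-1) hn hh hn hH1 (Or.inr ⟨rfl, Nat.le_sub_one_of_lt hh⟩)
  have hEstep : ∀ n, n < N → (E (n+1) - E n).PosSemidef := by
    intro n hn
    have h1 := (hDleE n (H-1) hn hH1).add (hEleD n (H-1) hn hH1)
    rwa [show E (n+1) - D n (H-1) + (D n (H-1) - E n) = E (n+1) - E n from by abel] at h1
  set f : ℕ → ℝ := fun n => (E n).det with hf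
  have hfpos : ∀ n, n ≤ N → 0 < f n := fun n hn => (hEpd n hn).det_pos
  have hfstep : ∀ n, n < N → f n ≤ f (n+1) := fun n hn =>
    LazyAux.det_le_det (hEpd n hn.le) (hEpd (n+1) hn) (hEstep n hn)
  set g : ℕ → ℝ := fun n => Real.log (f n) with hg
  have hgstep : ∀ n, n < N → 0 ≤ g (n+1) - g n := by
    intro n hn
    have := Real.log_le_log (hfpos n hn.le) (hfstep n hn)
    simp only [hg]
    linarith
  set Bd : Finset ℕ := (Finset.range N).filter (fun n => 2 * f n < f (n+1)) with hBd
  have hcard : (Bd.card : ℝ) * Real.log 2 ≤ g N - g 0 := by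
    have h1 : ∑ n ∈ Finset.range N, (g (n+1) - g n) = g N - g 0 := Finset.sum_range_sub g N
    have h2 : ∑ n ∈ Bd, (g (n+1) - g n) ≤ ∑ n ∈ Finset.range N, (g (n+1) - g n) :=
      Finset.sum_le_sum_of_subset_of_nonneg (Finset.filter_subset _ _)
        (fun i hi _ => hgstep i (Finset.mem_range.mp hi))
    have h3 : Bd.card • Real.log 2 ≤ ∑ n ∈ Bd, (g (n+1) - g n) := by
      refine Finset.card_nsmul_le_sum Bd _ _ ?_
      intro n hn
      rw [hBd, Finset.mem_filter, Finset.mem_range] at hn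
      obtain ⟨hnN, hnb⟩ := hn
      have hp : 0 < f n := hfpos n hnN.le
      have hlog : Real.log (2 * f n) ≤ Real.log (f (n+1)) :=
        Real.log_le_log (by linarith) hnb.le
      rw [Real.log_mul two_ne_zero hp.ne'] at hlog
      simp only [hg]
      linarith
    rw [nsmul_eq_mul] at h3
    linarith
  have hlog2 : (1:ℝ)/2 ≤ Real.log 2 := by
    have := Real.log_two_gt_d9
    linarith
  have hcard2 : (Bd.card : ℝ) ≤ 2 * (g N - g 0) := by
    have hc0 : (0:ℝ) ≤ (Bd.card : ℝ) := Nat.cast_nonneg _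
    nlinarith [mul_le_mul_of_nonneg_left hlog2 hc0]
  have hep : ∀ n, n < N →
      ∑ h ∈ Finset.range H, Real.sqrt (x n h ⬝ᵥ (E n)⁻¹ *ᵥ x n h)
      ≤ 2 * ∑ h ∈ Finset.range H, Real.sqrt (x n h ⬝ᵥ (D n h)⁻¹ *ᵥ x n h)
        + (if 2 * f n < f (n+1) then (H : ℝ) * (L / Real.sqrt lam) else 0) := by
    intro n hn
    by_cases hb : 2 * f n < f (n+1)
    · rw [if_pos hb]
      have h1 : ∑ h ∈ Finset.range H, Real.sqrt (x n h ⬝ᵥ (E n)⁻¹ *ᵥ x n h)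
          ≤ ∑ _h ∈ Finset.range H, (L / Real.sqrt lam) := by
        refine Finset.sum_le_sum fun h hh => ?_
        exact LazyAux.sqrt_upper hlam (hElow n hn.le) (hx n h hn (Finset.mem_range.mp hh))
      rw [Finset.sum_const, Finset.card_range, nsmul_eq_mul] at h1
      have h2 : 0 ≤ ∑ h ∈ Finset.range H, Real.sqrt (x n h ⬝ᵥ (D n h)⁻¹ *ᵥ x n h) :=
        Finset.sum_nonneg fun _ _ => Real.sqrt_nonneg _
      linarith
    · rw [if_neg hb, add_zero, Finset.mul_sum]
      push_neg at hb
      refine Finset.sum_le_sum fun h hh => ?_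
      have hh' := Finset.mem_range.mp hh
      refine LazyAux.sqrt_key (hEpd n hn.le) (hDpd n h hn hh') (hEleD n h hn hh') ?_ (x n h)
      have hd1 : (D n h).det ≤ f (n+1) :=
        LazyAux.det_le_det (hDpd n h hn hh') (hEpd (n+1) hn) (hDleE n h hn hh')
      calc (D n h).det ≤ f (n+1) := hd1
      _ ≤ 2 * f n := hb
  have hsum : ∑ n ∈ Finset.range N, ∑ h ∈ Finset.range H,
        Real.sqrt (x n h ⬝ᵥ (E n)⁻¹ *ᵥ x n h)
      ≤ ∑ n ∈ Finset.range N,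
          (2 * ∑ h ∈ Finset.range H, Real.sqrt (x n h ⬝ᵥ (D n h)⁻¹ *ᵥ x n h)
            + (if 2 * f n < f (n+1) then (H : ℝ) * (L / Real.sqrt lam) else 0)) :=
    Finset.sum_le_sum fun n hn => hep n (Finset.mem_range.mp hn)
  rw [Finset.sum_add_distrib, ← Finset.mul_sum] at hsum
  have hind : ∑ n ∈ Finset.range N,
      (if 2 * f n < f (n+1) then (H : ℝ) * (L / Real.sqrt lam) else 0)
      = (Bd.card : ℝ) * ((H : ℝ) * (L / Real.sqrt lam)) := by
    rw [← Finset.sum_filter, ← hBd, Finset.sum_const, nsmul_eq_mul]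
  have hloggoal : Real.log ((E N).det / (lam • (1 : Matrix (Fin dt) (Fin dt) ℝ)).det)
      = g N - g 0 := by
    have hfd : (lam • (1 : Matrix (Fin dt) (Fin dt) ℝ)).det = f 0 := by
      rw [hf]; exact congrArg Matrix.det hE0.symm
    rw [hfd, Real.log_div (hfpos N le_rfl).ne' (hfpos 0 (Nat.zero_le N)).ne']
  have hsqlam : 0 < Real.sqrt lam := Real.sqrt_pos.mpr hlam
  have hfinal : (Bd.card : ℝ) * ((H : ℝ) * (L / Real.sqrt lam))
      ≤ (2 * H * L / Real.sqrt lam) * (g N - g 0) := by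
    have hc : (0:ℝ) ≤ (H : ℝ) * (L / Real.sqrt lam) := by positivity
    calc (Bd.card : ℝ) * ((H : ℝ) * (L / Real.sqrt lam))
        ≤ (2 * (g N - g 0)) * ((H : ℝ) * (L / Real.sqrt lam)) :=
          mul_le_mul_of_nonneg_right hcard2 hc
    _ = (2 * H * L / Real.sqrt lam) * (g N - g 0) := by ring
  rw [hloggoal]
  rw [hind] at hsum
  linarith
end

section
/- Fix N, H ∈ ℕ, λ > 0, L_φ > 0 and d ∈ ℕ. Let φ_{n,h} ∈ ℝ^d for n ∈ [N], h ∈ [H] satisfy ‖φ_{n,h}‖₂ ≤ L_φ. Define Σ_n := λ I + ∑_{n' < n} ∑_{h ≤ H} φ_{n',h} φ_{n',h}ᵀ and Σ_{n,h} := Σ_n + ∑_{h' < h} φ_{n,h'} φ_{n,h'}ᵀ. Then ∑_{n=1}^{N} ∑_{h=1}^{H} ‖φ_{n,h}‖_{Σ_n^{-1}} ≤ 2 ∑_{n=1}^{N} ∑_{h=1}^{H} ‖φ_{n,h}‖_{Σ_{n,h}^{-1}} + (2 L_φ H d / √λ) · log( 1 + N H L_φ² / (λ d) ). -/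
open Matrix Finset

/-- The Gram matrix `Σ_n = λ I + ∑_{n' < n} ∑_{h < H} φ_{n',h} φ_{n',h}ᵀ`
(episodes and stages are `0`-indexed). -/
noncomputable def gramEpisode (d H : ℕ) (lam : ℝ) (φ : ℕ → ℕ → Fin d → ℝ) (n : ℕ) :
    Matrix (Fin d) (Fin d) ℝ :=
  lam • (1 : Matrix (Fin d) (Fin d) ℝ) +
    ∑ n' ∈ Finset.range n, ∑ h ∈ Finset.range H, vecMulVec (φ n' h) (φ n' h)

/-- The within-episode Gram matrix `Σ_{n,h} = Σ_n + ∑_{h' < h} φ_{n,h'} φ_{n,h'}ᵀ`. -/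
noncomputable def gramStage (d H : ℕ) (lam : ℝ) (φ : ℕ → ℕ → Fin d → ℝ) (n h : ℕ) :
    Matrix (Fin d) (Fin d) ℝ :=
  gramEpisode d H lam φ n + ∑ h' ∈ Finset.range h, vecMulVec (φ n h') (φ n h')

variable {d : ℕ}

lemma myVecMulVec_mulVec (u v x : Fin d → ℝ) : vecMulVec u v *ᵥ x = (v ⬝ᵥ x) • u := by
  ext i
  simp [vecMulVec_apply, mulVec, dotProduct, Finset.mul_sum, mul_comm, mul_assoc, mul_left_comm]

lemma myMul_vecMulVec (C : Matrix (Fin d) (Fin d) ℝ) (u v : Fin d → ℝ) :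
    C * vecMulVec u v = vecMulVec (C *ᵥ u) v := by
  ext i j
  simp only [vecMulVec_apply, mul_apply, mulVec, dotProduct, Finset.sum_mul]
  exact Finset.sum_congr rfl fun k _ => by ring

lemma myVecMulVec_smul_left (a : ℝ) (u v : Fin d → ℝ) :
    vecMulVec (a • u) v = a • vecMulVec u v := by
  ext i j; simp [vecMulVec_apply, mul_assoc]

lemma myPosSemidef_outer (v : Fin d → ℝ) : (vecMulVec v v).PosSemidef := by
  refine Matrix.PosSemidef.of_dotProduct_mulVec_nonneg ?_ ?_
  · ext i j; simp [vecMulVec_apply, conjTranspose_apply, mul_comm]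
  · intro x
    rw [myVecMulVec_mulVec]
    simp only [star_trivial, dotProduct_smul, smul_eq_mul]
    rw [dotProduct_comm]
    exact mul_self_nonneg _

lemma myDot_symm {M : Matrix (Fin d) (Fin d) ℝ} (hM : M.IsHermitian) (a b : Fin d → ℝ) :
    a ⬝ᵥ M *ᵥ b = b ⬝ᵥ M *ᵥ a := by
  have hMt : Mᵀ = M := by
    have := hM
    rwa [Matrix.IsHermitian, conjTranspose_eq_transpose_of_trivial] at this
  rw [Matrix.dotProduct_mulVec, ← Matrix.mulVec_transpose, hMt, dotProduct_comm]

lemma myDotSelf_nonneg (v : Fin d → ℝ) : 0 ≤ v ⬝ᵥ v :=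
  Finset.sum_nonneg fun _ _ => mul_self_nonneg _

lemma myPosDef_smul_one {lam : ℝ} (h : 0 < lam) :
    (lam • (1 : Matrix (Fin d) (Fin d) ℝ)).PosDef := by
  refine Matrix.PosDef.of_dotProduct_mulVec_pos ?_ ?_
  · ext i j
    simp only [conjTranspose_apply, Matrix.smul_apply, Matrix.one_apply, star_trivial, smul_eq_mul]
    by_cases hij : i = j <;> simp [hij, eq_comm]
  · intro x hx
    simp only [star_trivial, smul_mulVec, one_mulVec, dotProduct_smul, smul_eq_mul]
    exact mul_pos h (lt_of_le_of_ne (myDotSelf_nonneg x)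
      (fun hc => hx ((dotProduct_self_eq_zero).mp hc.symm)))

lemma myPosSemidef_sum {ι : Type*} (s : Finset ι) (f : ι → Matrix (Fin d) (Fin d) ℝ)
    (hf : ∀ i ∈ s, (f i).PosSemidef) : (∑ i ∈ s, f i).PosSemidef := by
  classical
  induction s using Finset.induction with
  | empty => simpa using Matrix.PosSemidef.zero
  | insert _ _ hnot ih =>
    rw [Finset.sum_insert hnot]
    exact ((hf _ (Finset.mem_insert_self _ _)).add
      (ih fun i hi => hf i (Finset.mem_insert_of_mem hi)))

lemma myCS {M : Matrix (Fin d) (Fin d) ℝ} (hM : M.PosSemidef) (a b : Fin d → ℝ) :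
    (a ⬝ᵥ M *ᵥ b) ^ 2 ≤ (a ⬝ᵥ M *ᵥ a) * (b ⬝ᵥ M *ᵥ b) := by
  have key : ∀ t : ℝ, 0 ≤ (b ⬝ᵥ M *ᵥ b) * (t * t) + (2 * (a ⬝ᵥ M *ᵥ b)) * t + (a ⬝ᵥ M *ᵥ a) := by
    intro t
    have h0 := hM.dotProduct_mulVec_nonneg (a + t • b)
    rw [star_trivial] at h0
    have hexp : (a + t • b) ⬝ᵥ M *ᵥ (a + t • b)
        = (b ⬝ᵥ M *ᵥ b) * (t * t) + (2 * (a ⬝ᵥ M *ᵥ b)) * t + (a ⬝ᵥ M *ᵥ a) := by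
      rw [mulVec_add, mulVec_smul, add_dotProduct, smul_dotProduct, dotProduct_add,
        dotProduct_add, dotProduct_smul, dotProduct_smul, smul_eq_mul, smul_eq_mul,
        smul_eq_mul, myDot_symm hM.1 b a]
      ring
    rw [hexp] at h0
    exact h0
  have hd : discrim (b ⬝ᵥ M *ᵥ b) (2 * (a ⬝ᵥ M *ᵥ b)) (a ⬝ᵥ M *ᵥ a) ≤ 0 :=
    discrim_le_zero key
  rw [discrim] at hd
  nlinarith [hd]

section Key
variable {A : Matrix (Fin d) (Fin d) ℝ} (hA : A.PosDef) (v : Fin d → ℝ)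

-- The basic quantities
lemma myKeyStep (hA : A.PosDef) (v : Fin d → ℝ) :
    A.det ≤ (A + vecMulVec v v).det ∧
    ∀ x : Fin d → ℝ, A.det * (x ⬝ᵥ A⁻¹ *ᵥ x)
      ≤ (A + vecMulVec v v).det * (x ⬝ᵥ (A + vecMulVec v v)⁻¹ *ᵥ x) := by
  classical
  set B := A + vecMulVec v v with hBdef
  have hB : B.PosDef := hA.add_posSemidef (myPosSemidef_outer v)
  have hBinv : B⁻¹.PosSemidef := hB.inv.posSemidef
  have hBunit : IsUnit B.det := isUnit_iff_ne_zero.mpr hB.det_pos.ne'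
  have hBI : B * B⁻¹ = 1 := Matrix.mul_nonsing_inv B hBunit
  set w : Fin d → ℝ := B⁻¹ *ᵥ v with hwdef
  set c : ℝ := v ⬝ᵥ w with hcdef
  have hBw : B *ᵥ w = v := by
    rw [hwdef, Matrix.mulVec_mulVec, hBI, Matrix.one_mulVec]
  have hc0 : 0 ≤ c := by
    have := hBinv.dotProduct_mulVec_nonneg v
    rwa [star_trivial] at this
  have hc1 : 1 - c > 0 := by
    by_cases hw : w = 0
    · simp [hcdef, hw]
    · have hq : 0 < w ⬝ᵥ A *ᵥ w := by
        have := hA.dotProduct_mulVec_pos hw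
        rwa [star_trivial] at this
      have hAw : A *ᵥ w = v - c • v := by
        have hAeq : A = B - vecMulVec v v := (add_sub_cancel_right A _).symm
        rw [hAeq, Matrix.sub_mulVec, hBw, myVecMulVec_mulVec]
      have hexp : w ⬝ᵥ A *ᵥ w = c - c * c := by
        rw [hAw, dotProduct_sub, dotProduct_smul, smul_eq_mul]
        have hwv : w ⬝ᵥ v = c := by rw [hcdef, dotProduct_comm]
        rw [hwv]
      nlinarith [hexp ▸ hq]
  -- Sherman–Morrison
  have hAinv : A⁻¹ = B⁻¹ + (1 - c)⁻¹ • vecMulVec w w := by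
    apply Matrix.inv_eq_right_inv
    have hAeq : A = B - vecMulVec v v := (add_sub_cancel_right A _).symm
    rw [hAeq, Matrix.sub_mul, Matrix.mul_add, Matrix.mul_add, hBI]
    have h1 : vecMulVec v v * B⁻¹ = vecMulVec v w := by
      have : (vecMulVec v v * B⁻¹) = (B⁻¹ᵀ * vecMulVec v v)ᵀ := by
        rw [Matrix.transpose_mul, Matrix.transpose_transpose]
        congr 1
        ext i j; simp [vecMulVec_apply, mul_comm]
      rw [this]
      have hBsym : B⁻¹ᵀ = B⁻¹ := by
        have := hBinv.1
        rwa [Matrix.IsHermitian, conjTranspose_eq_transpose_of_trivial] at this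
      rw [hBsym, myMul_vecMulVec, ← hwdef]
      ext i j; simp [vecMulVec_apply, mul_comm]
    have h2 : B * ((1 - c)⁻¹ • vecMulVec w w) = (1 - c)⁻¹ • vecMulVec v w := by
      rw [Matrix.mul_smul, myMul_vecMulVec, hBw]
    have h3 : vecMulVec v v * ((1 - c)⁻¹ • vecMulVec w w) = ((1 - c)⁻¹ * c) • vecMulVec v w := by
      rw [Matrix.mul_smul, myMul_vecMulVec, myVecMulVec_mulVec, hcdef, myVecMulVec_smul_left,
        smul_smul, mul_comm]
    have hs : (1 - c)⁻¹ = 1 + (1 - c)⁻¹ * c := by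
      field_simp
      ring
    have h4 : (1 - c)⁻¹ • vecMulVec v w
        = vecMulVec v w + ((1 - c)⁻¹ * c) • vecMulVec v w := by
      conv_lhs => rw [hs]
      rw [add_smul, one_smul]
    rw [h1, h2, h3, h4]
    abel
  -- determinant identity: det A = det B * (1 - c)
  have hdet : A.det = B.det * (1 - c) := by
    have hfac : A = B * (1 + Matrix.replicateCol Unit (-w) * Matrix.replicateRow Unit v) := by
      rw [Matrix.mul_add, Matrix.mul_one, ← Matrix.vecMulVec_eq, myMul_vecMulVec]
      have hBnw : B *ᵥ (-w) = -v := by rw [Matrix.mulVec_neg, hBw]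
      rw [hBnw]
      have hneg : vecMulVec (-v) v = -vecMulVec v v := by
        ext i j; simp [vecMulVec_apply]
      rw [hneg]
      have hAeq : A = B - vecMulVec v v := (add_sub_cancel_right A _).symm
      rw [hAeq, sub_eq_add_neg]
    calc A.det = B.det * Matrix.det (1 + Matrix.replicateCol Unit (-w) * Matrix.replicateRow Unit v) := by
          rw [hfac, Matrix.det_mul]
      _ = B.det * (1 + v ⬝ᵥ (-w)) := by rw [Matrix.det_one_add_replicateCol_mul_replicateRow]
      _ = B.det * (1 - c) := by rw [dotProduct_neg]; ring
  have hdetle : A.det ≤ B.det := by nlinarith [hB.det_pos]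
  refine ⟨hdetle, fun x => ?_⟩
  set q : ℝ := x ⬝ᵥ B⁻¹ *ᵥ x with hqdef
  have hq0 : 0 ≤ q := by have := hBinv.dotProduct_mulVec_nonneg x; rwa [star_trivial] at this
  have hlhs : x ⬝ᵥ A⁻¹ *ᵥ x = q + (1 - c)⁻¹ * ((w ⬝ᵥ x) * (w ⬝ᵥ x)) := by
    rw [hAinv, Matrix.add_mulVec, dotProduct_add, Matrix.smul_mulVec,
      dotProduct_smul, myVecMulVec_mulVec, dotProduct_smul, smul_eq_mul, smul_eq_mul,
      dotProduct_comm x w]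
  have hwx : w ⬝ᵥ x = v ⬝ᵥ B⁻¹ *ᵥ x := by
    rw [dotProduct_comm, ← myDot_symm hBinv.1]
  have hCS : (w ⬝ᵥ x) * (w ⬝ᵥ x) ≤ c * q := by
    have h := myCS hBinv v x
    have hvv : v ⬝ᵥ B⁻¹ *ᵥ v = c := rfl
    rw [hvv, ← hqdef] at h
    calc (w ⬝ᵥ x) * (w ⬝ᵥ x) = (v ⬝ᵥ B⁻¹ *ᵥ x) ^ 2 := by rw [hwx]; ring
      _ ≤ c * q := h
  rw [hlhs, hdet]
  have hinv : (1 - c) * (1 - c)⁻¹ = 1 := mul_inv_cancel₀ hc1.ne'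
  have hexp : B.det * (1 - c) * (q + (1 - c)⁻¹ * ((w ⬝ᵥ x) * (w ⬝ᵥ x)))
      = B.det * (1 - c) * q + B.det * ((1 - c) * (1 - c)⁻¹) * ((w ⬝ᵥ x) * (w ⬝ᵥ x)) := by
    ring
  rw [hexp, hinv]
  nlinarith [hB.det_pos, hCS, hc0, hc1, hq0]
end Key

section Gram
variable {H : ℕ} {lam : ℝ} {φ : ℕ → ℕ → Fin d → ℝ}

lemma gramStage_zero (n : ℕ) : gramStage d H lam φ n 0 = gramEpisode d H lam φ n := by
  simp [gramStage]

lemma gramStage_succ (n h : ℕ) :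
    gramStage d H lam φ n (h + 1) = gramStage d H lam φ n h + vecMulVec (φ n h) (φ n h) := by
  simp [gramStage, Finset.sum_range_succ, add_assoc]

lemma gramEpisode_succ (n : ℕ) :
    gramEpisode d H lam φ (n + 1) = gramStage d H lam φ n H := by
  simp [gramEpisode, gramStage, Finset.sum_range_succ, add_assoc]

lemma gramStage_posDef (hlam : 0 < lam) (n h : ℕ) : (gramStage d H lam φ n h).PosDef := by
  unfold gramStage gramEpisode
  rw [add_assoc]
  refine (myPosDef_smul_one hlam).add_posSemidef ?_
  refine Matrix.PosSemidef.add ?_ ?_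
  · exact myPosSemidef_sum _ _ fun n' _ => myPosSemidef_sum _ _ fun h' _ => myPosSemidef_outer _
  · exact myPosSemidef_sum _ _ fun h' _ => myPosSemidef_outer _

lemma gramEpisode_posDef (hlam : 0 < lam) (n : ℕ) : (gramEpisode d H lam φ n).PosDef := by
  rw [← gramStage_zero (H := H)]
  exact gramStage_posDef hlam n 0

lemma stage_det_mono (hlam : 0 < lam) (n : ℕ) {h h' : ℕ} (hh : h ≤ h') :
    (gramStage d H lam φ n h).det ≤ (gramStage d H lam φ n h').det := by
  induction h' , hh using Nat.le_induction with
  | base => exact le_refl _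
  | succ h' hh ih =>
    refine le_trans ih ?_
    rw [gramStage_succ]
    exact (myKeyStep (gramStage_posDef hlam n h') (φ n h')).1

lemma stage_quad (hlam : 0 < lam) (n : ℕ) (x : Fin d → ℝ) (h : ℕ) :
    (gramEpisode d H lam φ n).det * (x ⬝ᵥ (gramEpisode d H lam φ n)⁻¹ *ᵥ x)
      ≤ (gramStage d H lam φ n h).det * (x ⬝ᵥ (gramStage d H lam φ n h)⁻¹ *ᵥ x) := by
  induction h with
  | zero => rw [gramStage_zero]
  | succ h ih =>
    refine le_trans ih ?_
    rw [gramStage_succ]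
    exact (myKeyStep (gramStage_posDef hlam n h) (φ n h)).2 x

end Gram

lemma mySqrtQuadInv_le {lam : ℝ} (hlam : 0 < lam) {A P : Matrix (Fin d) (Fin d) ℝ}
    (hP : P.PosSemidef) (hAeq : A = lam • (1 : Matrix (Fin d) (Fin d) ℝ) + P)
    (x : Fin d → ℝ) :
    Real.sqrt (x ⬝ᵥ A⁻¹ *ᵥ x) ≤ Real.sqrt (x ⬝ᵥ x) / Real.sqrt lam := by
  have hA : A.PosDef := hAeq ▸ (myPosDef_smul_one hlam).add_posSemidef hP
  have hAunit : IsUnit A.det := isUnit_iff_ne_zero.mpr hA.det_pos.ne'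
  set q : ℝ := x ⬝ᵥ A⁻¹ *ᵥ x with hqdef
  have hq0 : 0 ≤ q := by have := hA.inv.posSemidef.dotProduct_mulVec_nonneg x; rwa [star_trivial] at this
  set y : Fin d → ℝ := A⁻¹ *ᵥ x with hydef
  have hAy : A *ᵥ y = x := by
    rw [hydef, Matrix.mulVec_mulVec, Matrix.mul_nonsing_inv A hAunit, Matrix.one_mulVec]
  have hqxy : q = x ⬝ᵥ y := rfl
  have hyy : lam * (y ⬝ᵥ y) ≤ q := by
    have h1 : x ⬝ᵥ y = y ⬝ᵥ A *ᵥ y := by rw [← hAy, dotProduct_comm]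
    have h2 : y ⬝ᵥ A *ᵥ y = lam * (y ⬝ᵥ y) + y ⬝ᵥ P *ᵥ y := by
      rw [hAeq, Matrix.add_mulVec, dotProduct_add, smul_mulVec, one_mulVec,
        dotProduct_smul, smul_eq_mul]
    have h3 : 0 ≤ y ⬝ᵥ P *ᵥ y := by have := hP.dotProduct_mulVec_nonneg y; rwa [star_trivial] at this
    rw [hqxy, h1, h2]; linarith
  have hCSxy : (x ⬝ᵥ y) ^ 2 ≤ (x ⬝ᵥ x) * (y ⬝ᵥ y) := by
    have := myCS (Matrix.PosSemidef.one (n := Fin d) (R := ℝ)) x y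
    simpa [Matrix.one_mulVec] using this
  have hqle : q ≤ (x ⬝ᵥ x) / lam := by
    rcases eq_or_lt_of_le hq0 with h0 | h0
    · rw [← h0]; exact div_nonneg (myDotSelf_nonneg x) hlam.le
    · rw [div_eq_inv_mul, ← mul_le_mul_iff_right₀ hlam, ← mul_assoc, mul_inv_cancel₀ hlam.ne',
        one_mul]
      nlinarith [hCSxy, hyy, hqxy, myDotSelf_nonneg x, myDotSelf_nonneg y]
  calc Real.sqrt q ≤ Real.sqrt ((x ⬝ᵥ x) / lam) := Real.sqrt_le_sqrt hqle
    _ = Real.sqrt (x ⬝ᵥ x) / Real.sqrt lam := Real.sqrt_div (myDotSelf_nonneg x) lam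

lemma myProd_le_sum_pow {m : ℕ} (hm : 0 < m) (μ : Fin m → ℝ) (hμ : ∀ i, 0 ≤ μ i) :
    ∏ i, μ i ≤ ((∑ i, μ i) / m) ^ m := by
  have hsumw : (0:ℝ) < ∑ _i : Fin m, (1:ℝ) := by simp [hm]
  have h := Real.geom_mean_le_arith_mean Finset.univ (fun _ => (1:ℝ)) μ
    (fun _ _ => zero_le_one) hsumw (fun i _ => hμ i)
  simp only [Real.rpow_one, one_mul] at h
  have hsum1 : (∑ _i : Fin m, (1:ℝ)) = (m:ℝ) := by simp
  rw [hsum1] at h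
  have hpos : (0:ℝ) ≤ ∏ i, μ i := Finset.prod_nonneg fun i _ => hμ i
  have h2 := Real.rpow_le_rpow (Real.rpow_nonneg hpos _) h (Nat.cast_nonneg m)
  rw [← Real.rpow_mul hpos, inv_mul_cancel₀ (by exact_mod_cast hm.ne' : (m:ℝ) ≠ 0),
    Real.rpow_one, Real.rpow_natCast] at h2
  exact h2

lemma myTrace_eq_sum_eigen {A : Matrix (Fin d) (Fin d) ℝ} (hH : A.IsHermitian) :
    A.trace = ∑ i, hH.eigenvalues i := by
  simpa using hH.trace_eq_sum_eigenvalues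

lemma myDet_le_trace_pow {A : Matrix (Fin d) (Fin d) ℝ} (hA : A.PosSemidef) (hd : 0 < d) :
    A.det ≤ (A.trace / d) ^ d := by
  have hH := hA.isHermitian
  have hdet : A.det = ∏ i, hH.eigenvalues i := by
    have := hH.det_eq_prod_eigenvalues
    simpa using this
  rw [hdet, myTrace_eq_sum_eigen hH]
  have := myProd_le_sum_pow hd hH.eigenvalues (fun i => hA.eigenvalues_nonneg i)
  simpa using this

lemma myTrace_outer (v : Fin d → ℝ) : (vecMulVec v v).trace = v ⬝ᵥ v := by
  simp [Matrix.trace, Matrix.diag, vecMulVec_apply, dotProduct]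

lemma mySqrt2_le_2 : Real.sqrt 2 ≤ 2 := by
  nlinarith [Real.sq_sqrt (by norm_num : (0:ℝ) ≤ 2), Real.sqrt_nonneg 2]


/-- Corollary: from `Σ_n⁻¹`-norms to `Σ_{n,h}⁻¹`-norms.
`∑_{n,h} ‖φ_{n,h}‖_{Σ_n⁻¹} ≤ 2 ∑_{n,h} ‖φ_{n,h}‖_{Σ_{n,h}⁻¹}
  + (2 L_φ H d / √λ) log(1 + N H L_φ² / (λ d))`. -/
theorem gram_episode_norm_sum_le
    (N H d : ℕ) (lam Lphi : ℝ) (hlam : 0 < lam) (hL : 0 < Lphi)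
    (φ : ℕ → ℕ → Fin d → ℝ)
    (hφ : ∀ n h, n < N → h < H → Real.sqrt (φ n h ⬝ᵥ φ n h) ≤ Lphi) :
    ∑ n ∈ Finset.range N, ∑ h ∈ Finset.range H,
        Real.sqrt (φ n h ⬝ᵥ ((gramEpisode d H lam φ n)⁻¹).mulVec (φ n h))
      ≤ 2 * ∑ n ∈ Finset.range N, ∑ h ∈ Finset.range H,
            Real.sqrt (φ n h ⬝ᵥ ((gramStage d H lam φ n h)⁻¹).mulVec (φ n h))
        + (2 * Lphi * H * d / Real.sqrt lam) *
            Real.log (1 + N * H * Lphi ^ 2 / (lam * d)) := by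
  classical
  rcases Nat.eq_zero_or_pos d with hd0 | hd
  · subst hd0
    simp [dotProduct]
  -- abbreviations
  set E : ℕ → Matrix (Fin d) (Fin d) ℝ := gramEpisode d H lam φ with hEdef
  set S : ℕ → ℕ → Matrix (Fin d) (Fin d) ℝ := gramStage d H lam φ with hSdef
  set a : ℝ := N * H * Lphi ^ 2 / (lam * d) with hadef
  have ha0 : 0 ≤ a := by
    apply div_nonneg
    · positivity
    · positivity
  have hEpos : ∀ n, (E n).PosDef := fun n => gramEpisode_posDef hlam n
  have hdetEpos : ∀ n, 0 < (E n).det := fun n => (hEpos n).det_pos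
  have hdetmono : ∀ n, (E n).det ≤ (E (n+1)).det := by
    intro n
    rw [hEdef, gramEpisode_succ, ← gramStage_zero (H := H) (lam := lam) (φ := φ) n]
    exact stage_det_mono hlam n (Nat.zero_le H)
  set P : ℕ → Prop := fun n => 2 * (E n).det < (E (n+1)).det with hPdef
  set Sbad : Finset ℕ := (Finset.range N).filter P with hSbaddef
  set K : ℕ := Sbad.card with hKdef
  -- counting: lam ^ d * 2 ^ K ≤ det (E N)
  have hE0 : (E 0).det = lam ^ d := by
    rw [hEdef]
    show (gramEpisode d H lam φ 0).det = lam ^ d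
    unfold gramEpisode
    simp [Matrix.det_smul]
  have hcount : ∀ m : ℕ, lam ^ d * 2 ^ ((Finset.range m).filter P).card ≤ (E m).det := by
    intro m
    induction m with
    | zero => simp [hE0]
    | succ m ih =>
      rw [Finset.range_add_one, Finset.filter_insert]
      by_cases hPm : P m
      · rw [if_pos hPm]
        have hm : m ∉ (Finset.range m).filter P := fun hc =>
          absurd (Finset.mem_range.mp (Finset.mem_of_mem_filter m hc)) (lt_irrefl m)
        rw [Finset.card_insert_of_notMem hm, pow_succ]
        calc lam ^ d * (2 ^ ((Finset.range m).filter P).card * 2)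
            = 2 * (lam ^ d * 2 ^ ((Finset.range m).filter P).card) := by ring
          _ ≤ 2 * (E m).det := by linarith [ih]
          _ ≤ (E (m+1)).det := le_of_lt hPm
      · rw [if_neg hPm]
        exact le_trans ih (hdetmono m)
  -- trace bound
  have htrace : (E N).trace ≤ lam * d + N * H * Lphi ^ 2 := by
    rw [hEdef]
    show (gramEpisode d H lam φ N).trace ≤ lam * d + N * H * Lphi ^ 2
    unfold gramEpisode
    rw [Matrix.trace_add, Matrix.trace_smul, Matrix.trace_one, Matrix.trace_sum]
    have h1 : ∀ n ∈ Finset.range N,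
        (∑ h ∈ Finset.range H, vecMulVec (φ n h) (φ n h)).trace ≤ H * Lphi ^ 2 := by
      intro n hn
      rw [Matrix.trace_sum]
      have h2 : ∀ h ∈ Finset.range H, (vecMulVec (φ n h) (φ n h)).trace ≤ Lphi ^ 2 := by
        intro h hh
        rw [myTrace_outer]
        have := hφ n h (Finset.mem_range.mp hn) (Finset.mem_range.mp hh)
        nlinarith [Real.sq_sqrt (myDotSelf_nonneg (φ n h)), Real.sqrt_nonneg (φ n h ⬝ᵥ φ n h)]
      calc ∑ h ∈ Finset.range H, (vecMulVec (φ n h) (φ n h)).trace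
          ≤ ∑ _h ∈ Finset.range H, Lphi ^ 2 := Finset.sum_le_sum h2
        _ = H * Lphi ^ 2 := by simp [mul_comm]
    have h3 : ∑ n ∈ Finset.range N,
        (∑ h ∈ Finset.range H, vecMulVec (φ n h) (φ n h)).trace ≤ N * (H * Lphi ^ 2) := by
      calc ∑ n ∈ Finset.range N, (∑ h ∈ Finset.range H, vecMulVec (φ n h) (φ n h)).trace
          ≤ ∑ _n ∈ Finset.range N, (H * Lphi ^ 2) := Finset.sum_le_sum h1
        _ = N * (H * Lphi ^ 2) := by simp [mul_comm]
    have hcard : (Fintype.card (Fin d) : ℝ) = (d : ℝ) := by simp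
    rw [smul_eq_mul, hcard]
    nlinarith [h3]
  -- determinant bound
  have hdPos : (0:ℝ) < d := by exact_mod_cast hd
  have hdetbound : (E N).det ≤ lam ^ d * (1 + a) ^ d := by
    have h1 : (E N).det ≤ ((E N).trace / d) ^ d :=
      myDet_le_trace_pow (hEpos N).posSemidef hd
    have htrnn : 0 ≤ (E N).trace := by
      have := myTrace_eq_sum_eigen (hEpos N).isHermitian
      rw [this]
      exact Finset.sum_nonneg fun i _ => (hEpos N).posSemidef.eigenvalues_nonneg i
    have h2 : ((E N).trace / d) ^ d ≤ ((lam * d + N * H * Lphi ^ 2) / d) ^ d := by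
      apply pow_le_pow_left₀ (div_nonneg htrnn hdPos.le)
      exact (div_le_div_iff_of_pos_right hdPos).mpr htrace
    have h3 : (lam * d + N * H * Lphi ^ 2) / d = lam * (1 + a) := by
      rw [hadef]
      field_simp
    calc (E N).det ≤ ((E N).trace / d) ^ d := h1
      _ ≤ ((lam * d + N * H * Lphi ^ 2) / d) ^ d := h2
      _ = (lam * (1 + a)) ^ d := by rw [h3]
      _ = lam ^ d * (1 + a) ^ d := mul_pow _ _ _
  -- bound on K
  have hKbound : (K : ℝ) ≤ 2 * d * Real.log (1 + a) := by
    have h1 : lam ^ d * 2 ^ K ≤ lam ^ d * (1 + a) ^ d :=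
      le_trans (hcount N) hdetbound
    have hlamd : (0:ℝ) < lam ^ d := pow_pos hlam d
    have h2 : (2:ℝ) ^ K ≤ (1 + a) ^ d := le_of_mul_le_mul_left h1 hlamd
    have h3 : Real.log ((2:ℝ) ^ K) ≤ Real.log ((1 + a) ^ d) :=
      Real.log_le_log (by positivity) h2
    rw [Real.log_pow, Real.log_pow] at h3
    have hlog2 : (1:ℝ)/2 ≤ Real.log 2 := by
      have := Real.log_two_gt_d9
      linarith
    have hK0 : (0:ℝ) ≤ (K:ℝ) := Nat.cast_nonneg K
    nlinarith [h3, hlog2, hK0]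
  -- per-term bounds
  have hbadterm : ∀ n h, n < N → h < H →
      Real.sqrt (φ n h ⬝ᵥ (E n)⁻¹ *ᵥ (φ n h)) ≤ Lphi / Real.sqrt lam := by
    intro n h hn hh
    have h1 := mySqrtQuadInv_le hlam
      (myPosSemidef_sum (Finset.range n) _ fun n' _ =>
        myPosSemidef_sum (Finset.range H) _ fun h' _ => myPosSemidef_outer (φ n' h'))
      (rfl : E n = lam • (1 : Matrix (Fin d) (Fin d) ℝ) +
        ∑ n' ∈ Finset.range n, ∑ h' ∈ Finset.range H, vecMulVec (φ n' h') (φ n' h'))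
      (φ n h)
    refine le_trans h1 ?_
    exact (div_le_div_iff_of_pos_right (Real.sqrt_pos.mpr hlam)).mpr (hφ n h hn hh)
  have hgoodterm : ∀ n h, ¬ P n → h < H →
      Real.sqrt (φ n h ⬝ᵥ (E n)⁻¹ *ᵥ (φ n h))
        ≤ 2 * Real.sqrt (φ n h ⬝ᵥ (S n h)⁻¹ *ᵥ (φ n h)) := by
    intro n h hPn _hh
    set x : Fin d → ℝ := φ n h
    set q1 : ℝ := x ⬝ᵥ (E n)⁻¹ *ᵥ x with hq1def
    set q2 : ℝ := x ⬝ᵥ (S n h)⁻¹ *ᵥ x with hq2def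
    have hq2nn : 0 ≤ q2 := by
      have := (gramStage_posDef hlam n h (lam := lam) (φ := φ) (H := H)).inv.posSemidef.dotProduct_mulVec_nonneg x
      rwa [star_trivial] at this
    have hq1nn : 0 ≤ q1 := by
      have := (hEpos n).inv.posSemidef.dotProduct_mulVec_nonneg x
      rwa [star_trivial] at this
    have hchain : (E n).det * q1 ≤ 2 * (E n).det * q2 := by
      have h1 : (E n).det * q1 ≤ (S n h).det * q2 := stage_quad hlam n x h
      have h2 : (S n h).det ≤ (S n H).det := stage_det_mono hlam n (le_of_lt _hh)
      have h3 : (S n H).det = (E (n+1)).det := by rw [hEdef, hSdef, gramEpisode_succ]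
      have h4 : (E (n+1)).det ≤ 2 * (E n).det := not_lt.mp hPn
      calc (E n).det * q1 ≤ (S n h).det * q2 := h1
        _ ≤ (E (n+1)).det * q2 := by
            rw [← h3]; exact mul_le_mul_of_nonneg_right h2 hq2nn
        _ ≤ 2 * (E n).det * q2 := mul_le_mul_of_nonneg_right h4 hq2nn
    have hq12 : q1 ≤ 2 * q2 := by
      have := hdetEpos n
      nlinarith [hchain]
    calc Real.sqrt q1 ≤ Real.sqrt (2 * q2) := Real.sqrt_le_sqrt hq12
      _ = Real.sqrt 2 * Real.sqrt q2 := Real.sqrt_mul (by norm_num) q2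
      _ ≤ 2 * Real.sqrt q2 :=
          mul_le_mul_of_nonneg_right mySqrt2_le_2 (Real.sqrt_nonneg q2)
  -- assembly
  set T : ℕ → ℕ → ℝ := fun n h => Real.sqrt (φ n h ⬝ᵥ (E n)⁻¹ *ᵥ (φ n h)) with hTdef
  set U : ℕ → ℕ → ℝ := fun n h => Real.sqrt (φ n h ⬝ᵥ (S n h)⁻¹ *ᵥ (φ n h)) with hUdef
  have hsplit : ∑ n ∈ Finset.range N, ∑ h ∈ Finset.range H, T n h
      = (∑ n ∈ Sbad, ∑ h ∈ Finset.range H, T n h)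
        + ∑ n ∈ (Finset.range N).filter (fun n => ¬ P n), ∑ h ∈ Finset.range H, T n h := by
    rw [hSbaddef]
    exact (Finset.sum_filter_add_sum_filter_not (Finset.range N) P _).symm
  have hbadsum : ∑ n ∈ Sbad, ∑ h ∈ Finset.range H, T n h
      ≤ (K : ℝ) * (H * (Lphi / Real.sqrt lam)) := by
    have h1 : ∀ n ∈ Sbad, ∑ h ∈ Finset.range H, T n h ≤ H * (Lphi / Real.sqrt lam) := by
      intro n hn
      have hnN : n < N := Finset.mem_range.mp (Finset.mem_of_mem_filter n hn)
      calc ∑ h ∈ Finset.range H, T n h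
          ≤ ∑ _h ∈ Finset.range H, (Lphi / Real.sqrt lam) :=
            Finset.sum_le_sum fun h hh => hbadterm n h hnN (Finset.mem_range.mp hh)
        _ = H * (Lphi / Real.sqrt lam) := by simp [mul_comm]
    calc ∑ n ∈ Sbad, ∑ h ∈ Finset.range H, T n h
        ≤ ∑ _n ∈ Sbad, (H * (Lphi / Real.sqrt lam)) := Finset.sum_le_sum h1
      _ = (K : ℝ) * (H * (Lphi / Real.sqrt lam)) := by
          rw [Finset.sum_const, hKdef, nsmul_eq_mul]
  have hgoodsum : ∑ n ∈ (Finset.range N).filter (fun n => ¬ P n),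
        ∑ h ∈ Finset.range H, T n h
      ≤ 2 * ∑ n ∈ Finset.range N, ∑ h ∈ Finset.range H, U n h := by
    have h1 : ∑ n ∈ (Finset.range N).filter (fun n => ¬ P n), ∑ h ∈ Finset.range H, T n h
        ≤ ∑ n ∈ (Finset.range N).filter (fun n => ¬ P n),
            ∑ h ∈ Finset.range H, 2 * U n h := by
      refine Finset.sum_le_sum fun n hn => Finset.sum_le_sum fun h hh => ?_
      exact hgoodterm n h (Finset.mem_filter.mp hn).2 (Finset.mem_range.mp hh)
    have h2 : ∑ n ∈ (Finset.range N).filter (fun n => ¬ P n),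
          ∑ h ∈ Finset.range H, 2 * U n h
        ≤ ∑ n ∈ Finset.range N, ∑ h ∈ Finset.range H, 2 * U n h := by
      refine Finset.sum_le_sum_of_subset_of_nonneg (Finset.filter_subset _ _) ?_
      intro n _ _
      exact Finset.sum_nonneg fun h _ => by positivity
    calc _ ≤ _ := h1
      _ ≤ ∑ n ∈ Finset.range N, ∑ h ∈ Finset.range H, 2 * U n h := h2
      _ = 2 * ∑ n ∈ Finset.range N, ∑ h ∈ Finset.range H, U n h := by
          rw [Finset.mul_sum]
          exact Finset.sum_congr rfl fun n _ => by rw [Finset.mul_sum]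
  have hbadfinal : (K : ℝ) * (H * (Lphi / Real.sqrt lam))
      ≤ (2 * Lphi * H * d / Real.sqrt lam) * Real.log (1 + a) := by
    have hsq : 0 < Real.sqrt lam := Real.sqrt_pos.mpr hlam
    have hHnn : (0:ℝ) ≤ H := Nat.cast_nonneg H
    have h1 : (K : ℝ) * (H * (Lphi / Real.sqrt lam))
        ≤ (2 * d * Real.log (1 + a)) * (H * (Lphi / Real.sqrt lam)) := by
      apply mul_le_mul_of_nonneg_right hKbound
      positivity
    refine le_trans h1 (le_of_eq ?_)
    field_simp
  rw [hsplit]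
  calc (∑ n ∈ Sbad, ∑ h ∈ Finset.range H, T n h)
        + ∑ n ∈ (Finset.range N).filter (fun n => ¬ P n), ∑ h ∈ Finset.range H, T n h
      ≤ (K : ℝ) * (H * (Lphi / Real.sqrt lam))
        + 2 * ∑ n ∈ Finset.range N, ∑ h ∈ Finset.range H, U n h :=
        add_le_add hbadsum hgoodsum
    _ ≤ (2 * Lphi * H * d / Real.sqrt lam) * Real.log (1 + a)
        + 2 * ∑ n ∈ Finset.range N, ∑ h ∈ Finset.range H, U n h :=
        add_le_add_left hbadfinal _
    _ = 2 * (∑ n ∈ Finset.range N, ∑ h ∈ Finset.range H, U n h)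
        + (2 * Lphi * H * d / Real.sqrt lam) * Real.log (1 + a) := by ring
end

section
/- Let (Ω, ℱ, ℙ) be a probability space with a filtration (ℱ_t)_{t ≥ 0}, and let (X_t)_{t ≥ 1} be a martingale difference sequence with respect to this filtration (X_t is ℱ_t-measurable and 𝔼[X_t | ℱ_{t−1}] = 0 for all t) satisfying |X_t| ≤ ζ almost surely for some ζ > 0. Then for every δ ∈ (0,1], with probability at least 1 − δ, simultaneously for all integers N ≥ 2: ∑_{t=1}^{N} X_t ≤ 2 ζ √( N · ln( 6 ln N / δ ) ). -/
open MeasureTheory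

open Finset

namespace AnytimeMDS

variable {Ω : Type*} {m0 : MeasurableSpace Ω}

/-- partial sums `S n = ∑_{t=1}^n X t` -/
def pS (X : ℕ → Ω → ℝ) (n : ℕ) (ω : Ω) : ℝ := ∑ t ∈ Finset.Icc 1 n, X t ω

lemma pS_zero (X : ℕ → Ω → ℝ) (ω : Ω) : pS X 0 ω = 0 := by simp [pS]

lemma pS_succ (X : ℕ → Ω → ℝ) (n : ℕ) (ω : Ω) :
    pS X (n + 1) ω = pS X n ω + X (n + 1) ω := by
  simp [pS, Finset.sum_Icc_succ_top (Nat.le_add_left 1 n)]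

lemma pS_sm (ℱ : Filtration ℕ m0) (X : ℕ → Ω → ℝ)
    (hadapted : ∀ t, 1 ≤ t → StronglyMeasurable[ℱ t] (X t)) (n : ℕ) :
    StronglyMeasurable[ℱ n] (pS X n) := by
  unfold pS
  apply Finset.stronglyMeasurable_fun_sum
  intro t ht
  simp only [Finset.mem_Icc] at ht
  exact (hadapted t ht.1).mono (ℱ.mono ht.2)

lemma pS_bdd (μ : Measure Ω) (X : ℕ → Ω → ℝ) (ζ : ℝ)
    (hbdd : ∀ t, 1 ≤ t → ∀ᵐ ω ∂μ, |X t ω| ≤ ζ) (n : ℕ) :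
    ∀ᵐ ω ∂μ, |pS X n ω| ≤ n * ζ := by
  have h : ∀ᵐ ω ∂μ, ∀ t, 1 ≤ t → |X t ω| ≤ ζ := by
    rw [MeasureTheory.ae_all_iff]
    intro t
    by_cases ht : 1 ≤ t
    · filter_upwards [hbdd t ht] with ω hω _ using hω
    · filter_upwards with ω h1 using absurd h1 ht
  filter_upwards [h] with ω hω
  calc |pS X n ω| ≤ ∑ t ∈ Finset.Icc 1 n, |X t ω| := Finset.abs_sum_le_sum_abs _ _
    _ ≤ ∑ t ∈ Finset.Icc 1 n, ζ :=
        Finset.sum_le_sum (fun t ht => hω t (Finset.mem_Icc.1 ht).1)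
    _ ≤ n * ζ := by
        rw [Finset.sum_const, Nat.card_Icc]
        simp only [Nat.add_sub_cancel, nsmul_eq_mul]
        exact le_rfl

/-- convexity bound: for `|x| ≤ ζ`,
`exp (l*x) ≤ cosh (l*ζ) + x * (exp (l*ζ) - exp (-(l*ζ)))/(2*ζ)`. -/
lemma exp_le_aux {l ζ x : ℝ} (hζ : 0 < ζ) (hx : |x| ≤ ζ) :
    Real.exp (l * x) ≤ Real.cosh (l * ζ) +
      x * ((Real.exp (l * ζ) - Real.exp (-(l * ζ))) / (2 * ζ)) := by
  have hax := abs_le.1 hx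
  have h := convexOn_exp.2 (Set.mem_univ (-(l * ζ))) (Set.mem_univ (l * ζ))
    (show (0:ℝ) ≤ (ζ - x) / (2 * ζ) from div_nonneg (by linarith) (by linarith))
    (show (0:ℝ) ≤ (ζ + x) / (2 * ζ) from div_nonneg (by linarith) (by linarith))
    (by field_simp; ring)
  simp only [smul_eq_mul] at h
  have e1 : (ζ - x) / (2 * ζ) * (-(l * ζ)) + (ζ + x) / (2 * ζ) * (l * ζ) = l * x := by
    rw [div_mul_eq_mul_div, div_mul_eq_mul_div, ← add_div, div_eq_iff (by positivity)]
    ring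
  rw [e1] at h
  rw [Real.cosh_eq]
  have h2 : (ζ - x) / (2 * ζ) * Real.exp (-(l * ζ)) + (ζ + x) / (2 * ζ) * Real.exp (l * ζ)
      = (Real.exp (l * ζ) + Real.exp (-(l * ζ))) / 2 +
        x * ((Real.exp (l * ζ) - Real.exp (-(l * ζ))) / (2 * ζ)) := by
    field_simp
    ring
  linarith [h, h2.symm.le]

end AnytimeMDS

namespace AnytimeMDS2
open AnytimeMDS

variable {Ω : Type*} {m0 : MeasurableSpace Ω}

lemma int_of_bdd (μ : Measure Ω) [IsProbabilityMeasure μ] {f : Ω → ℝ} (C : ℝ)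
    (hm : AEStronglyMeasurable f μ) (h : ∀ᵐ ω ∂μ, |f ω| ≤ C) : Integrable f μ :=
  Integrable.mono' (integrable_const C) hm
    (by filter_upwards [h] with ω hω using by simpa [Real.norm_eq_abs] using hω)

section Ctx

variable (μ : Measure Ω) [IsProbabilityMeasure μ] (ℱ : Filtration ℕ m0)
  (X : ℕ → Ω → ℝ) (ζ : ℝ)

lemma Y_sm (hadapted : ∀ t, 1 ≤ t → StronglyMeasurable[ℱ t] (X t)) (l : ℝ) (n : ℕ) :
    StronglyMeasurable[ℱ n] (fun ω => Real.exp (l * pS X n ω)) :=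
  Real.continuous_exp.comp_stronglyMeasurable
    (stronglyMeasurable_const.mul (pS_sm ℱ X hadapted n))

lemma Y_bdd (hbdd : ∀ t, 1 ≤ t → ∀ᵐ ω ∂μ, |X t ω| ≤ ζ) (hζ : 0 < ζ) (l : ℝ) (n : ℕ) :
    ∀ᵐ ω ∂μ, |Real.exp (l * pS X n ω)| ≤ Real.exp (|l| * (n * ζ)) := by
  filter_upwards [pS_bdd μ X ζ hbdd n] with ω hω
  rw [Real.abs_exp]
  apply Real.exp_le_exp.2
  calc l * pS X n ω ≤ |l * pS X n ω| := le_abs_self _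
    _ = |l| * |pS X n ω| := abs_mul _ _
    _ ≤ |l| * (n * ζ) := by
        apply mul_le_mul_of_nonneg_left _ (abs_nonneg l)
        exact hω

lemma Y_int (hadapted : ∀ t, 1 ≤ t → StronglyMeasurable[ℱ t] (X t))
    (hbdd : ∀ t, 1 ≤ t → ∀ᵐ ω ∂μ, |X t ω| ≤ ζ) (hζ : 0 < ζ) (l : ℝ) (n : ℕ) :
    Integrable (fun ω => Real.exp (l * pS X n ω)) μ :=
  int_of_bdd μ (Real.exp (|l| * (n * ζ)))
    (((Y_sm ℱ X hadapted l n).mono (ℱ.le n)).aestronglyMeasurable)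
    (Y_bdd μ X ζ hbdd hζ l n)

lemma YX_int (hadapted : ∀ t, 1 ≤ t → StronglyMeasurable[ℱ t] (X t))
    (hint : ∀ t, 1 ≤ t → Integrable (X t) μ)
    (hbdd : ∀ t, 1 ≤ t → ∀ᵐ ω ∂μ, |X t ω| ≤ ζ) (hζ : 0 < ζ) (l : ℝ) (n : ℕ) :
    Integrable (fun ω => Real.exp (l * pS X n ω) * X (n + 1) ω) μ := by
  apply int_of_bdd μ (Real.exp (|l| * (n * ζ)) * ζ)
  · exact (((Y_sm ℱ X hadapted l n).mono (ℱ.le n)).aestronglyMeasurable).mul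
      ((hint (n+1) (Nat.le_add_left 1 n)).aestronglyMeasurable)
  · filter_upwards [Y_bdd μ X ζ hbdd hζ l n, hbdd (n+1) (Nat.le_add_left 1 n)] with ω h1 h2
    rw [abs_mul]
    exact mul_le_mul (by simpa using h1) h2 (abs_nonneg _) (Real.exp_pos _).le

lemma YX_condexp_zero (hadapted : ∀ t, 1 ≤ t → StronglyMeasurable[ℱ t] (X t))
    (hint : ∀ t, 1 ≤ t → Integrable (X t) μ)
    (hmdz : ∀ t, 1 ≤ t → μ[X t | ℱ (t - 1)] =ᵐ[μ] 0)
    (hbdd : ∀ t, 1 ≤ t → ∀ᵐ ω ∂μ, |X t ω| ≤ ζ) (hζ : 0 < ζ) (l : ℝ) (n : ℕ) :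
    μ[(fun ω => Real.exp (l * pS X n ω)) * X (n + 1) | ℱ n] =ᵐ[μ] 0 := by
  have h2 : μ[X (n+1) | ℱ n] =ᵐ[μ] 0 := by
    simpa using hmdz (n+1) (Nat.le_add_left 1 n)
  have h1 := condExp_mul_of_stronglyMeasurable_left (μ := μ) (Y_sm ℱ X hadapted l n)
    (YX_int μ ℱ X ζ hadapted hint hbdd hζ l n)
    (hint (n+1) (Nat.le_add_left 1 n))
  refine h1.trans ?_
  filter_upwards [h2] with ω hω
  simp only [Pi.mul_apply, Pi.zero_apply] at *
  rw [hω, mul_zero]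

lemma YX_integral_zero (hadapted : ∀ t, 1 ≤ t → StronglyMeasurable[ℱ t] (X t))
    (hint : ∀ t, 1 ≤ t → Integrable (X t) μ)
    (hmdz : ∀ t, 1 ≤ t → μ[X t | ℱ (t - 1)] =ᵐ[μ] 0)
    (hbdd : ∀ t, 1 ≤ t → ∀ᵐ ω ∂μ, |X t ω| ≤ ζ) (hζ : 0 < ζ) (l : ℝ) (n : ℕ) :
    ∫ ω, Real.exp (l * pS X n ω) * X (n + 1) ω ∂μ = 0 := by
  have h0 := YX_condexp_zero μ ℱ X ζ hadapted hint hmdz hbdd hζ l n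
  have : ∫ ω, ((fun ω => Real.exp (l * pS X n ω)) * X (n+1)) ω ∂μ
      = ∫ ω, (μ[(fun ω => Real.exp (l * pS X n ω)) * X (n + 1) | ℱ n]) ω ∂μ :=
    (integral_condExp (ℱ.le n)).symm
  calc ∫ ω, Real.exp (l * pS X n ω) * X (n + 1) ω ∂μ
      = ∫ ω, (μ[(fun ω => Real.exp (l * pS X n ω)) * X (n + 1) | ℱ n]) ω ∂μ := this
    _ = ∫ ω, (0 : Ω → ℝ) ω ∂μ := integral_congr_ae h0
    _ = 0 := by simp

lemma mgf_le (hadapted : ∀ t, 1 ≤ t → StronglyMeasurable[ℱ t] (X t))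
    (hint : ∀ t, 1 ≤ t → Integrable (X t) μ)
    (hmdz : ∀ t, 1 ≤ t → μ[X t | ℱ (t - 1)] =ᵐ[μ] 0)
    (hbdd : ∀ t, 1 ≤ t → ∀ᵐ ω ∂μ, |X t ω| ≤ ζ) (hζ : 0 < ζ) (l : ℝ) :
    ∀ n : ℕ, ∫ ω, Real.exp (l * pS X n ω) ∂μ ≤ Real.exp (l ^ 2 * ζ ^ 2 * n / 2) := by
  intro n
  induction n with
  | zero => simp [pS_zero]
  | succ n ih =>
    set c : ℝ := (Real.exp (l * ζ) - Real.exp (-(l * ζ))) / (2 * ζ) with hc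
    have hintL : Integrable (fun ω => Real.exp (l * pS X (n+1) ω)) μ :=
      Y_int μ ℱ X ζ hadapted hbdd hζ l (n+1)
    have hintY : Integrable (fun ω => Real.exp (l * pS X n ω)) μ :=
      Y_int μ ℱ X ζ hadapted hbdd hζ l n
    have hintYX : Integrable (fun ω => Real.exp (l * pS X n ω) * X (n + 1) ω) μ :=
      YX_int μ ℱ X ζ hadapted hint hbdd hζ l n
    have hintR : Integrable (fun ω => Real.exp (l * pS X n ω) * Real.cosh (l * ζ) +
        Real.exp (l * pS X n ω) * X (n + 1) ω * c) μ :=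
      (hintY.mul_const _).add (hintYX.mul_const _)
    have hmono : ∫ ω, Real.exp (l * pS X (n+1) ω) ∂μ ≤
        ∫ ω, (Real.exp (l * pS X n ω) * Real.cosh (l * ζ) +
          Real.exp (l * pS X n ω) * X (n + 1) ω * c) ∂μ := by
      apply integral_mono_ae hintL hintR
      filter_upwards [hbdd (n+1) (Nat.le_add_left 1 n)] with ω hω
      have h := exp_le_aux (l := l) hζ hω
      have hY : (0:ℝ) ≤ Real.exp (l * pS X n ω) := (Real.exp_pos _).le
      have := mul_le_mul_of_nonneg_left h hY
      calc Real.exp (l * pS X (n+1) ω)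
          = Real.exp (l * pS X n ω) * Real.exp (l * X (n+1) ω) := by
            rw [pS_succ, mul_add, Real.exp_add]
        _ ≤ Real.exp (l * pS X n ω) *
            (Real.cosh (l * ζ) + X (n+1) ω * c) := this
        _ = Real.exp (l * pS X n ω) * Real.cosh (l * ζ) +
            Real.exp (l * pS X n ω) * X (n + 1) ω * c := by ring
    have hsplit : ∫ ω, (Real.exp (l * pS X n ω) * Real.cosh (l * ζ) +
        Real.exp (l * pS X n ω) * X (n + 1) ω * c) ∂μ
        = (∫ ω, Real.exp (l * pS X n ω) ∂μ) * Real.cosh (l * ζ) +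
          (∫ ω, Real.exp (l * pS X n ω) * X (n + 1) ω ∂μ) * c := by
      rw [integral_add (hintY.mul_const _) (hintYX.mul_const _),
        integral_mul_const, integral_mul_const]
    have hzero := YX_integral_zero μ ℱ X ζ hadapted hint hmdz hbdd hζ l n
    have hcosh : Real.cosh (l * ζ) ≤ Real.exp (l ^ 2 * ζ ^ 2 / 2) := by
      have := Real.cosh_le_exp_half_sq (l * ζ)
      calc Real.cosh (l * ζ) ≤ Real.exp ((l * ζ) ^ 2 / 2) := this
        _ = Real.exp (l ^ 2 * ζ ^ 2 / 2) := by ring_nf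
    have hYnn : 0 ≤ ∫ ω, Real.exp (l * pS X n ω) ∂μ :=
      integral_nonneg (fun ω => (Real.exp_pos _).le)
    calc ∫ ω, Real.exp (l * pS X (n+1) ω) ∂μ
        ≤ (∫ ω, Real.exp (l * pS X n ω) ∂μ) * Real.cosh (l * ζ) +
          (∫ ω, Real.exp (l * pS X n ω) * X (n + 1) ω ∂μ) * c := hmono.trans hsplit.le
      _ = (∫ ω, Real.exp (l * pS X n ω) ∂μ) * Real.cosh (l * ζ) := by
          rw [hzero, zero_mul, add_zero]
      _ ≤ Real.exp (l ^ 2 * ζ ^ 2 * n / 2) * Real.exp (l ^ 2 * ζ ^ 2 / 2) :=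
          mul_le_mul ih hcosh (Real.cosh_pos _).le (Real.exp_pos _).le
      _ = Real.exp (l ^ 2 * ζ ^ 2 * ((n:ℝ)+1) / 2) := by
          rw [← Real.exp_add]
          congr 1
          ring
      _ = Real.exp (l ^ 2 * ζ ^ 2 * ((n+1 : ℕ):ℝ) / 2) := by push_cast; ring_nf

end Ctx
end AnytimeMDS2

namespace AnytimeMDS3
open AnytimeMDS AnytimeMDS2

variable {Ω : Type*} {m0 : MeasurableSpace Ω}

set_option linter.unusedSectionVars false

section Ctx2
variable (μ : Measure Ω) [IsProbabilityMeasure μ] (ℱ : Filtration ℕ m0)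
  (X : ℕ → Ω → ℝ) (ζ : ℝ)

lemma Yg_int (hadapted : ∀ t, 1 ≤ t → StronglyMeasurable[ℱ t] (X t))
    (hint : ∀ t, 1 ≤ t → Integrable (X t) μ)
    (hbdd : ∀ t, 1 ≤ t → ∀ᵐ ω ∂μ, |X t ω| ≤ ζ) (hζ : 0 < ζ) (l : ℝ) (n : ℕ) :
    Integrable ((fun ω => Real.exp (l * pS X n ω)) * fun ω => 1 + l * X (n + 1) ω) μ := by
  have h1 : ((fun ω => Real.exp (l * pS X n ω)) * fun ω => 1 + l * X (n + 1) ω)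
      = (fun ω => Real.exp (l * pS X n ω) +
          (Real.exp (l * pS X n ω) * X (n + 1) ω) * l) := by
    funext ω; simp only [Pi.mul_apply]; ring
  rw [h1]
  exact (Y_int μ ℱ X ζ hadapted hbdd hζ l n).add
    ((YX_int μ ℱ X ζ hadapted hint hbdd hζ l n).mul_const l)

lemma exp_submartingale (hadapted : ∀ t, 1 ≤ t → StronglyMeasurable[ℱ t] (X t))
    (hint : ∀ t, 1 ≤ t → Integrable (X t) μ)
    (hmdz : ∀ t, 1 ≤ t → μ[X t | ℱ (t - 1)] =ᵐ[μ] 0)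
    (hbdd : ∀ t, 1 ≤ t → ∀ᵐ ω ∂μ, |X t ω| ≤ ζ) (hζ : 0 < ζ) (l : ℝ) :
    Submartingale (fun n ω => Real.exp (l * pS X n ω)) ℱ μ := by
  apply submartingale_nat (fun n => Y_sm ℱ X hadapted l n)
    (fun n => Y_int μ ℱ X ζ hadapted hbdd hζ l n)
  intro n
  have hYg := Yg_int μ ℱ X ζ hadapted hint hbdd hζ l n
  -- conditional expectation of Y n * (1 + l * X (n+1)) is Y n
  have hXce : μ[X (n+1) | ℱ n] =ᵐ[μ] 0 := by
    simpa using hmdz (n+1) (Nat.le_add_left 1 n)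
  have hce : μ[(fun ω => Real.exp (l * pS X n ω)) * (fun ω => 1 + l * X (n + 1) ω) | ℱ n]
      =ᵐ[μ] (fun ω => Real.exp (l * pS X n ω)) := by
    have h1 := condExp_mul_of_stronglyMeasurable_left (μ := μ) (Y_sm ℱ X hadapted l n) hYg
      ((integrable_const (1:ℝ)).add ((hint (n+1) (Nat.le_add_left 1 n)).const_mul l))
    refine h1.trans ?_
    have h2 : μ[(fun ω => 1 + l * X (n + 1) ω) | ℱ n] =ᵐ[μ] fun _ => 1 := by
      have h3 : (fun ω => 1 + l * X (n + 1) ω) =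
          (fun (_ : Ω) => (1:ℝ)) + l • (X (n+1)) := by
        funext ω; simp [smul_eq_mul]
      rw [h3]
      refine (condExp_add (integrable_const 1)
        (((hint (n+1) (Nat.le_add_left 1 n))).smul l) (ℱ n)).trans ?_
      have h4 := condExp_smul (μ := μ) (m := ℱ n) l (X (n+1))
      have h5 : μ[fun (_ : Ω) => (1:ℝ) | ℱ n] = fun _ => 1 := condExp_const (ℱ.le n) 1
      filter_upwards [h4, hXce] with ω hω1 hω2
      simp only [Pi.add_apply, h5, Pi.smul_apply, smul_eq_mul] at *
      rw [hω1]
      simp [hω2]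
    filter_upwards [h2] with ω hω
    simp only [Pi.mul_apply] at *
    rw [hω, mul_one]
  -- monotonicity step
  have hmono : μ[(fun ω => Real.exp (l * pS X n ω)) * (fun ω => 1 + l * X (n + 1) ω) | ℱ n]
      ≤ᵐ[μ] μ[fun ω => Real.exp (l * pS X (n+1) ω) | ℱ n] := by
    apply condExp_mono hYg (Y_int μ ℱ X ζ hadapted hbdd hζ l (n+1))
    filter_upwards with ω
    simp only [Pi.mul_apply]
    have h6 : 1 + l * X (n+1) ω ≤ Real.exp (l * X (n+1) ω) := by
      have := Real.add_one_le_exp (l * X (n+1) ω)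
      linarith
    calc Real.exp (l * pS X n ω) * (1 + l * X (n + 1) ω)
        ≤ Real.exp (l * pS X n ω) * Real.exp (l * X (n+1) ω) :=
          mul_le_mul_of_nonneg_left h6 (Real.exp_pos _).le
      _ = Real.exp (l * pS X (n+1) ω) := by rw [pS_succ, mul_add, Real.exp_add]
  exact (hce.symm.le.trans hmono)

/-- one-sided Azuma–Hoeffding with maximal inequality -/
lemma azuma_max (hadapted : ∀ t, 1 ≤ t → StronglyMeasurable[ℱ t] (X t))
    (hint : ∀ t, 1 ≤ t → Integrable (X t) μ)
    (hmdz : ∀ t, 1 ≤ t → μ[X t | ℱ (t - 1)] =ᵐ[μ] 0)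
    (hbdd : ∀ t, 1 ≤ t → ∀ᵐ ω ∂μ, |X t ω| ≤ ζ) (hζ : 0 < ζ)
    (n : ℕ) (hn : 1 ≤ n) (ε : ℝ) (hε : 0 ≤ ε) :
    μ {ω | ∃ k, k ≤ n ∧ ε ≤ pS X k ω} ≤
      ENNReal.ofReal (Real.exp (-(ε ^ 2) / (2 * n * ζ ^ 2))) := by
  set l : ℝ := ε / (n * ζ ^ 2) with hl
  have hn0 : (0:ℝ) < n := by exact_mod_cast hn
  have hl0 : 0 ≤ l := div_nonneg hε (by positivity)
  set c : NNReal := (Real.exp (l * ε)).toNNReal with hcdef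
  have hc0 : (0:ℝ) < Real.exp (l * ε) := Real.exp_pos _
  have hsub := exp_submartingale μ ℱ X ζ hadapted hint hmdz hbdd hζ l
  have hmax := maximal_ineq hsub
    (fun n ω => (Real.exp_pos _).le) (ε := c) n
  set A := {ω | (c:ℝ) ≤ (Finset.range (n + 1)).sup' Finset.nonempty_range_add_one
      fun k => Real.exp (l * pS X k ω)} with hA
  -- the event is included in A
  have hincl : {ω | ∃ k, k ≤ n ∧ ε ≤ pS X k ω} ⊆ A := by
    intro ω hω
    obtain ⟨k, hk, hke⟩ := hω
    have h1 : Real.exp (l * ε) ≤ Real.exp (l * pS X k ω) :=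
      Real.exp_le_exp.2 (mul_le_mul_of_nonneg_left hke hl0)
    have h2 : (c:ℝ) = Real.exp (l * ε) := Real.coe_toNNReal _ hc0.le
    rw [Set.mem_setOf_eq, h2]
    refine h1.trans ?_
    exact Finset.le_sup' (fun k => Real.exp (l * pS X k ω))
      (Finset.mem_range.2 (Nat.lt_succ_of_le hk))
  -- bound the integral
  have hsetint : ∫ ω in A, Real.exp (l * pS X n ω) ∂μ ≤ Real.exp (l ^ 2 * ζ ^ 2 * n / 2) :=
    (setIntegral_le_integral (Y_int μ ℱ X ζ hadapted hbdd hζ l n)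
      (Filter.Eventually.of_forall (fun ω => (Real.exp_pos _).le))).trans
      (mgf_le μ ℱ X ζ hadapted hint hmdz hbdd hζ l n)
  have hmax2 : (c : ENNReal) * μ A ≤ ENNReal.ofReal (Real.exp (l ^ 2 * ζ ^ 2 * n / 2)) := by
    calc (c : ENNReal) * μ A = c • μ A := rfl
      _ ≤ ENNReal.ofReal (∫ ω in A, Real.exp (l * pS X n ω) ∂μ) := hmax
      _ ≤ ENNReal.ofReal (Real.exp (l ^ 2 * ζ ^ 2 * n / 2)) := ENNReal.ofReal_le_ofReal hsetint
  have hcne : (c : ENNReal) ≠ 0 := by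
    simp only [hcdef, ne_eq, ENNReal.coe_eq_zero, Real.toNNReal_eq_zero, not_le]
    exact hc0
  have hcnt : (c : ENNReal) ≠ ⊤ := ENNReal.coe_ne_top
  have hμA : μ A ≤ ENNReal.ofReal (Real.exp (l ^ 2 * ζ ^ 2 * n / 2)) / (c : ENNReal) :=
    ENNReal.le_div_iff_mul_le (Or.inl hcne) (Or.inl hcnt) |>.2
      (by rwa [mul_comm] at hmax2)
  have hdiv : ENNReal.ofReal (Real.exp (l ^ 2 * ζ ^ 2 * n / 2)) / (c : ENNReal)
      = ENNReal.ofReal (Real.exp (l ^ 2 * ζ ^ 2 * n / 2 - l * ε)) := by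
    have : (c : ENNReal) = ENNReal.ofReal (Real.exp (l * ε)) := rfl
    rw [this, ← ENNReal.ofReal_div_of_pos hc0, ← Real.exp_sub]
  have hexp : l ^ 2 * ζ ^ 2 * n / 2 - l * ε = -(ε ^ 2) / (2 * n * ζ ^ 2) := by
    rw [hl]
    field_simp
    ring
  calc μ {ω | ∃ k, k ≤ n ∧ ε ≤ pS X k ω} ≤ μ A := measure_mono hincl
    _ ≤ _ := by rw [hexp] at hdiv; rw [← hdiv] at *; exact hμA

end Ctx2
end AnytimeMDS3

namespace EpochAux

/-- epoch endpoints: 11, 16, 24, 36, 54, ... -/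
def epo : ℕ → ℕ
  | 0 => 11
  | j + 1 => 3 * epo j / 2

lemma epo_ge (j : ℕ) : 11 ≤ epo j := by
  induction j with
  | zero => simp [epo]
  | succ j ih =>
      show 11 ≤ 3 * epo j / 2
      have h := Nat.div_add_mod (3 * epo j) 2
      have h2 : 3 * epo j % 2 < 2 := Nat.mod_lt _ (by norm_num)
      omega

lemma epo_lt (j : ℕ) : epo j < epo (j + 1) := by
  have h := Nat.div_add_mod (3 * epo j) 2
  have h2 : 3 * epo j % 2 < 2 := Nat.mod_lt _ (by norm_num)
  have h3 := epo_ge j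
  show epo j < 3 * epo j / 2
  omega

lemma epo_two_mul (j : ℕ) : 2 * epo (j + 1) ≤ 3 * epo j := by
  have h := Nat.div_add_mod (3 * epo j) 2
  show 2 * (3 * epo j / 2) ≤ 3 * epo j
  omega

lemma epo_ratio (j : ℕ) : 16 * epo j ≤ 11 * epo (j + 1) := by
  have h := Nat.div_add_mod (3 * epo j) 2
  have h2 : 3 * epo j % 2 < 2 := Nat.mod_lt _ (by norm_num)
  have h3 := epo_ge j
  show 16 * epo j ≤ 11 * (3 * epo j / 2)
  omega

lemma epo_unbounded (N : ℕ) : ∃ j, N < epo j := by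
  refine ⟨N, ?_⟩
  induction N with
  | zero => have := epo_ge 0; omega
  | succ n ih => have := epo_lt n; omega

lemma epo_between {N : ℕ} (hN : 11 ≤ N) : ∃ j, epo j ≤ N ∧ N < epo (j + 1) := by
  classical
  have hex := epo_unbounded N
  set j0 := Nat.find hex with hj0
  have hspec : N < epo j0 := Nat.find_spec hex
  have hne : j0 ≠ 0 := by
    intro h
    rw [h] at hspec
    simp only [epo] at hspec
    omega
  obtain ⟨j, hj⟩ := Nat.exists_eq_succ_of_ne_zero hne
  rw [hj] at hspec
  refine ⟨j, ?_, hspec⟩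
  have h5 : ¬ N < epo j := Nat.find_min hex (by omega)
  omega

end EpochAux

namespace NumAux

lemma exp_ub_cubic {x : ℝ} (h0 : 0 ≤ x) (h1 : x ≤ 1) :
    Real.exp x ≤ 1 + x + x ^ 2 / 2 + x ^ 3 * (2 / 9) := by
  have h := Real.exp_bound (x := x) (by rwa [abs_of_nonneg h0]) (n := 3) (by norm_num)
  have h2 : ∑ i ∈ Finset.range 3, x ^ i / (Nat.factorial i) = 1 + x + x ^ 2 / 2 := by
    simp [Finset.sum_range_succ, Nat.factorial]
  rw [h2, abs_of_nonneg h0] at h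
  have h3 := (abs_le.1 h).2
  norm_num [Nat.factorial] at h3 ⊢
  linarith

lemma exp_one_add_ub {r A : ℝ} (h0 : 0 ≤ r) (h1 : r ≤ 1)
    (hA : 2.7182818286 * (1 + r + r ^ 2 / 2 + r ^ 3 * (2 / 9)) ≤ A) :
    Real.exp (1 + r) ≤ A := by
  have h2 : Real.exp (1 + r) = Real.exp 1 * Real.exp r := by rw [← Real.exp_add]
  have he := Real.exp_one_lt_d9.le
  have hr := exp_ub_cubic h0 h1
  have hc : (0:ℝ) ≤ 1 + r + r ^ 2 / 2 + r ^ 3 * (2 / 9) := by positivity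
  nlinarith [Real.exp_pos 1, Real.exp_pos r]

lemma exp_two_add_ub {r A : ℝ} (h0 : 0 ≤ r) (h1 : r ≤ 1)
    (hA : 2.7182818286 ^ 2 * (1 + r + r ^ 2 / 2 + r ^ 3 * (2 / 9)) ≤ A) :
    Real.exp (2 + r) ≤ A := by
  have h2 : Real.exp (2 + r) = Real.exp 1 * Real.exp 1 * Real.exp r := by
    rw [← Real.exp_add, ← Real.exp_add]; norm_num
  have he := Real.exp_one_lt_d9.le
  have hr := exp_ub_cubic h0 h1
  have hc : (0:ℝ) ≤ 1 + r + r ^ 2 / 2 + r ^ 3 * (2 / 9) := by positivity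
  have hee : Real.exp 1 * Real.exp 1 ≤ 2.7182818286 ^ 2 := by
    nlinarith [Real.exp_pos 1]
  rw [h2]
  calc Real.exp 1 * Real.exp 1 * Real.exp r
      ≤ 2.7182818286 ^ 2 * (1 + r + r ^ 2 / 2 + r ^ 3 * (2 / 9)) :=
        mul_le_mul hee hr (Real.exp_pos r).le (by norm_num)
    _ ≤ A := hA

lemma log11 : (2.39:ℝ) ≤ Real.log 11 := by
  rw [Real.le_log_iff_exp_le (by norm_num)]
  have : (2.39:ℝ) = 2 + 0.39 := by norm_num
  rw [this]
  exact exp_two_add_ub (by norm_num) (by norm_num) (by norm_num)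

lemma log8 : (2.079:ℝ) ≤ Real.log 8 := by
  rw [Real.le_log_iff_exp_le (by norm_num)]
  have : (2.079:ℝ) = 2 + 0.079 := by norm_num
  rw [this]
  exact exp_two_add_ub (by norm_num) (by norm_num) (by norm_num)

lemma log6 : (1.6931:ℝ) ≤ Real.log 6 := by
  rw [Real.le_log_iff_exp_le (by norm_num)]
  have : (1.6931:ℝ) = 1 + 0.6931 := by norm_num
  rw [this]
  exact exp_one_add_ub (by norm_num) (by norm_num) (by norm_num)

lemma log2 : (0.6931:ℝ) ≤ Real.log 2 := by
  have := Real.log_two_gt_d9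
  linarith

lemma logA : (1.25:ℝ) ≤ Real.log (6 * 0.6931) := by
  rw [Real.le_log_iff_exp_le (by norm_num)]
  have : (1.25:ℝ) = 1 + 0.25 := by norm_num
  rw [this]
  exact exp_one_add_ub (by norm_num) (by norm_num) (by norm_num)

lemma logB : (1.75:ℝ) ≤ Real.log (6 * 1.6931) := by
  rw [Real.le_log_iff_exp_le (by norm_num)]
  have : (1.75:ℝ) = 1 + 0.75 := by norm_num
  rw [this]
  exact exp_one_add_ub (by norm_num) (by norm_num) (by norm_num)

lemma logC : (2.5:ℝ) ≤ Real.log (6 * 2.079) := by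
  rw [Real.le_log_iff_exp_le (by norm_num)]
  have : (2.5:ℝ) = 2 + 0.5 := by norm_num
  rw [this]
  exact exp_two_add_ub (by norm_num) (by norm_num) (by norm_num)

lemma exp037 : Real.exp 0.37 ≤ 16 / 11 := by
  have := exp_ub_cubic (x := 0.37) (by norm_num) (by norm_num)
  norm_num at this ⊢
  linarith

end NumAux

namespace SeriesAux
open EpochAux NumAux

noncomputable def xx (j : ℕ) : ℝ := 6 * Real.log (epo j)
noncomputable def ww (j : ℕ) : ℝ := xx j ^ (-(1/3) : ℝ)
noncomputable def tt (j : ℕ) : ℝ := (xx j)⁻¹ * ww j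

lemma log_epo_ge (j : ℕ) : (2.39:ℝ) ≤ Real.log (epo j) := by
  refine log11.trans ?_
  rw [Real.log_le_log_iff (by norm_num) (by exact_mod_cast (epo_ge j).trans_lt' (by norm_num))]
  exact_mod_cast epo_ge j

lemma xx_ge (j : ℕ) : (14.34:ℝ) ≤ xx j := by
  have := log_epo_ge j
  simp only [xx]
  linarith

lemma xx_pos (j : ℕ) : (0:ℝ) < xx j := lt_of_lt_of_le (by norm_num) (xx_ge j)

lemma ww_pos (j : ℕ) : (0:ℝ) < ww j := Real.rpow_pos_of_pos (xx_pos j) _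

lemma tt_nonneg (j : ℕ) : (0:ℝ) ≤ tt j :=
  mul_nonneg (inv_nonneg.2 (xx_pos j).le) (ww_pos j).le

lemma cube_ww (j : ℕ) : ww j ^ (3:ℕ) = (xx j)⁻¹ := by
  rw [ww, ← Real.rpow_natCast (xx j ^ (-(1/3):ℝ)) 3, ← Real.rpow_mul (xx_pos j).le]
  norm_num
  exact Real.rpow_neg_one _

lemma xx_step (j : ℕ) : xx j + 2.22 ≤ xx (j + 1) := by
  have h1 : Real.log (epo j) + 0.37 ≤ Real.log (epo (j + 1)) := by
    rw [Real.le_log_iff_exp_le (by exact_mod_cast (epo_ge (j+1)).trans_lt' (by norm_num))]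
    rw [Real.exp_add, Real.exp_log (by exact_mod_cast (epo_ge j).trans_lt' (by norm_num))]
    have h2 : ((epo j : ℝ)) * Real.exp 0.37 ≤ (epo j : ℝ) * (16 / 11) :=
      mul_le_mul_of_nonneg_left exp037 (by positivity)
    refine h2.trans ?_
    have h3 : (16:ℝ) * epo j ≤ 11 * epo (j + 1) := by exact_mod_cast epo_ratio j
    linarith
  simp only [xx]
  linarith

lemma tel (j : ℕ) : tt j ≤ (7/4) * (ww j - ww (j + 1)) := by
  set x := xx j with hx
  set y := xx (j + 1) with hy
  have hxge := xx_ge j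
  have hstep := xx_step j
  have hx0 : (0:ℝ) < x := xx_pos j
  have hy0 : (0:ℝ) < y := xx_pos (j+1)
  have hu1 : (0:ℝ) < 1 - 4 / (7 * x) := by
    rw [sub_pos, div_lt_one (by positivity)]
    linarith
  have key : ww (j + 1) ≤ ww j * (1 - 4 / (7 * x)) := by
    apply le_of_pow_le_pow_left₀ (n := 3) (by norm_num)
      (mul_nonneg (ww_pos j).le hu1.le)
    rw [mul_pow, cube_ww, cube_ww]
    -- goal : y⁻¹ ≤ x⁻¹ * (1 - 4/(7x))³
    have hcube : (1 - 12 / (7 * x)) ≤ (1 - 4 / (7 * x)) ^ (3:ℕ) := by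
      have hu : (0:ℝ) ≤ 4 / (7 * x) := by positivity
      have hu2 : 4 / (7 * x) ≤ 1 := by
        rw [div_le_one (by positivity)]; linarith
      have h12 : 12 / (7 * x) = 3 * (4 / (7 * x)) := by ring
      rw [h12]
      nlinarith [sq_nonneg (4 / (7 * x))]
    have hmain : y⁻¹ ≤ x⁻¹ * (1 - 12 / (7 * x)) := by
      have hrw : x⁻¹ * (1 - 12 / (7 * x)) = (x - 12 / 7) / (x * x) := by
        field_simp
      rw [hrw, inv_eq_one_div, div_le_div_iff₀ hy0 (by positivity)]
      nlinarith [hstep, hxge]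
    refine hmain.trans ?_
    exact mul_le_mul_of_nonneg_left hcube (inv_nonneg.2 hx0.le)
  have heq : (7/4 : ℝ) * (ww j - ww j * (1 - 4 / (7 * x))) = tt j := by
    have : ww j - ww j * (1 - 4 / (7 * x)) = ww j * (4 / (7 * x)) := by ring
    rw [this, tt]
    field_simp
    ring
  calc tt j = (7/4 : ℝ) * (ww j - ww j * (1 - 4 / (7 * x))) := heq.symm
    _ ≤ (7/4) * (ww j - ww (j + 1)) := by
        apply mul_le_mul_of_nonneg_left _ (by norm_num)
        linarith [key]

lemma sum_tt_le_one (J : ℕ) : ∑ j ∈ Finset.range J, tt j ≤ 1 := by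
  have h1 : ∑ j ∈ Finset.range J, tt j ≤
      ∑ j ∈ Finset.range J, (7/4 : ℝ) * (ww j - ww (j + 1)) :=
    Finset.sum_le_sum (fun j _ => tel j)
  have h2 : ∑ j ∈ Finset.range J, (7/4 : ℝ) * (ww j - ww (j + 1))
      = (7/4) * (ww 0 - ww J) := by
    rw [← Finset.mul_sum, Finset.sum_range_sub' ww]
  have h3 : ww 0 ≤ 4/7 := by
    apply le_of_pow_le_pow_left₀ (n := 3) (by norm_num) (by norm_num)
    rw [cube_ww]
    have := xx_ge 0
    rw [inv_le_comm₀ (xx_pos 0) (by norm_num)]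
    norm_num
    linarith
  have h4 := (ww_pos J).le
  calc ∑ j ∈ Finset.range J, tt j ≤ (7/4) * (ww 0 - ww J) := h1.trans h2.le
    _ ≤ (7/4) * (4/7) := by
        apply mul_le_mul_of_nonneg_left _ (by norm_num)
        linarith
    _ = 1 := by norm_num

lemma smallN {δ : ℝ} (hδ0 : 0 < δ) (hδ1 : δ ≤ 1) {N : ℕ} (h2 : 2 ≤ N) (h10 : N ≤ 10) :
    (N:ℝ) ≤ 4 * Real.log (6 * Real.log N / δ) := by
  have hN0 : (0:ℝ) < N := by exact_mod_cast Nat.lt_of_lt_of_le (by norm_num) h2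
  have key : ∀ c : ℝ, 0 < c → c ≤ Real.log N →
      Real.log (6 * c) ≤ Real.log (6 * Real.log N / δ) := by
    intro c hc hcle
    have hlogN : (0:ℝ) < Real.log N := lt_of_lt_of_le hc hcle
    rw [Real.log_le_log_iff (by positivity) (by positivity)]
    calc 6 * c ≤ 6 * Real.log N := by linarith
      _ ≤ 6 * Real.log N / δ := by
          rw [le_div_iff₀ hδ0]
          nlinarith [hlogN]
  have hmono : ∀ M : ℕ, M ≤ N → 0 < M → Real.log M ≤ Real.log N := by
    intro M hM hM0
    rw [Real.log_le_log_iff (by exact_mod_cast hM0) hN0]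
    exact_mod_cast hM
  rcases le_or_gt N 5 with h5 | h5
  · have hlogN : (0.6931:ℝ) ≤ Real.log N :=
      log2.trans (by simpa using hmono 2 h2 (by norm_num))
    have := (key 0.6931 (by norm_num) hlogN)
    have hA := logA.trans this
    have : (N:ℝ) ≤ 5 := by exact_mod_cast h5
    linarith
  · rcases le_or_gt N 7 with h7 | h7
    · have hlogN : (1.6931:ℝ) ≤ Real.log N :=
        log6.trans (by simpa using hmono 6 (by omega) (by norm_num))
      have hB := logB.trans (key 1.6931 (by norm_num) hlogN)
      have : (N:ℝ) ≤ 7 := by exact_mod_cast h7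
      linarith
    · have hlogN : (2.079:ℝ) ≤ Real.log N :=
        log8.trans (by simpa using hmono 8 (by omega) (by norm_num))
      have hC := logC.trans (key 2.079 (by norm_num) hlogN)
      have : (N:ℝ) ≤ 10 := by exact_mod_cast h10
      linarith

end SeriesAux


open AnytimeMDS AnytimeMDS2 AnytimeMDS3 EpochAux NumAux SeriesAux in
/-- anytime martingale concentration. For a bounded martingale difference
sequence `(X_t)_{t ≥ 1}` with `|X_t| ≤ ζ`, with probability at least `1 - δ`, simultaneously
for all `N ≥ 2`: `∑_{t=1}^N X_t ≤ 2 ζ √(N ln(6 ln N / δ))`. -/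
theorem martingale_difference_anytime_bound
    {Ω : Type*} {m0 : MeasurableSpace Ω} (μ : Measure Ω) [IsProbabilityMeasure μ]
    (ℱ : Filtration ℕ m0) (X : ℕ → Ω → ℝ) (ζ : ℝ) (hζ : 0 < ζ)
    (hadapted : ∀ t, 1 ≤ t → StronglyMeasurable[ℱ t] (X t))
    (hint : ∀ t, 1 ≤ t → Integrable (X t) μ)
    (hmdz : ∀ t, 1 ≤ t → μ[X t | ℱ (t - 1)] =ᵐ[μ] 0)
    (hbdd : ∀ t, 1 ≤ t → ∀ᵐ ω ∂μ, |X t ω| ≤ ζ)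
    (δ : ℝ) (hδ0 : 0 < δ) (hδ1 : δ ≤ 1) :
    ENNReal.ofReal (1 - δ) ≤
      μ {ω | ∀ N : ℕ, 2 ≤ N →
        ∑ t ∈ Finset.Icc 1 N, X t ω ≤
          2 * ζ * Real.sqrt (N * Real.log (6 * Real.log N / δ))} := by
  classical
  set L : ℕ → ℝ := fun N => Real.log (6 * Real.log N / δ) with hLdef
  set ε : ℕ → ℝ := fun j => 2 * ζ * Real.sqrt (epo j * L (epo j)) with hεdef
  set B : ℕ → Set Ω := fun j => {ω | ∃ k, k ≤ epo (j + 1) ∧ ε j ≤ pS X k ω} with hBdef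
  -- basic positivity facts
  have hepo_pos : ∀ j, (0:ℝ) < epo j := fun j => by
    exact_mod_cast (epo_ge j).trans_lt' (by norm_num)
  have hxx : ∀ j, xx j = 6 * Real.log (epo j) := fun j => rfl
  have hLepo_eq : ∀ j, L (epo j) = Real.log (xx j / δ) := fun j => rfl
  have hz_pos : ∀ j, (0:ℝ) < xx j / δ := fun j => div_pos (xx_pos j) hδ0
  have hxx_le_z : ∀ j, xx j ≤ xx j / δ := fun j => by
    rw [le_div_iff₀ hδ0]
    nlinarith [xx_pos j]
  have hLepo_nonneg : ∀ j, 0 ≤ L (epo j) := fun j => by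
    rw [hLepo_eq]
    apply Real.log_nonneg
    calc (1:ℝ) ≤ xx j := le_trans (by norm_num) (xx_ge j)
      _ ≤ xx j / δ := hxx_le_z j
  have hε_nonneg : ∀ j, 0 ≤ ε j := fun j =>
    mul_nonneg (by linarith) (Real.sqrt_nonneg _)
  -- per-epoch bound
  have hB : ∀ j, μ (B j) ≤ ENNReal.ofReal (δ * tt j) := by
    intro j
    have haz := azuma_max μ ℱ X ζ hadapted hint hmdz hbdd hζ (epo (j+1))
      (le_trans (by norm_num) (epo_ge (j+1))) (ε j) (hε_nonneg j)
    refine haz.trans ?_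
    have hg0 : (0:ℝ) ≤ (epo j : ℝ) * L (epo j) :=
      mul_nonneg (hepo_pos j).le (hLepo_nonneg j)
    have hε2 : ε j ^ 2 = 4 * ζ ^ 2 * ((epo j : ℝ) * L (epo j)) := by
      simp only [hεdef]
      rw [mul_pow, mul_pow, Real.sq_sqrt hg0]
      ring
    have h46 : (4:ℝ) * epo (j+1) ≤ 6 * epo j := by
      have := epo_two_mul j
      have h := (Nat.cast_le (α := ℝ)).2 this
      push_cast at h
      linarith
    have hD : (0:ℝ) < 2 * (epo (j+1):ℝ) * ζ ^ 2 := by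
      have := hepo_pos (j+1)
      positivity
    have hexp_le : -(ε j ^ 2) / (2 * (epo (j+1) : ℝ) * ζ ^ 2) ≤ -(4/3) * L (epo j) := by
      rw [hε2, neg_div, neg_mul, neg_le_neg_iff, le_div_iff₀ hD]
      nlinarith [mul_le_mul_of_nonneg_right h46
        (mul_nonneg (hLepo_nonneg j) (sq_nonneg ζ))]
    apply ENNReal.ofReal_le_ofReal
    have h1 : Real.exp (-(ε j ^ 2) / (2 * (epo (j+1):ℝ) * ζ ^ 2)) ≤
        Real.exp (-(4/3) * L (epo j)) := Real.exp_le_exp.2 hexp_le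
    refine le_trans h1 ?_
    set z := xx j / δ with hzdef
    have hz := hz_pos j
    have h2 : Real.exp (-(4/3) * L (epo j)) = z⁻¹ * z ^ (-(1/3) : ℝ) := by
      rw [hLepo_eq]
      rw [show -(4/3 : ℝ) * Real.log z = -Real.log z + Real.log z * (-(1/3)) by ring]
      rw [Real.exp_add, Real.exp_neg, Real.exp_log hz, Real.rpow_def_of_pos hz]
    rw [h2]
    have h3 : z⁻¹ = δ * (xx j)⁻¹ := by
      rw [hzdef, inv_div, div_eq_mul_inv]
    have h4 : z ^ (-(1/3):ℝ) ≤ ww j :=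
      Real.rpow_le_rpow_of_nonpos (xx_pos j) (hxx_le_z j) (by norm_num)
    calc z⁻¹ * z ^ (-(1/3):ℝ) ≤ z⁻¹ * ww j :=
          mul_le_mul_of_nonneg_left h4 (inv_nonneg.2 hz.le)
      _ = δ * ((xx j)⁻¹ * ww j) := by rw [h3]; ring
      _ = δ * tt j := rfl
  -- union bound
  have hBad : μ (⋃ j, B j) ≤ ENNReal.ofReal δ := by
    refine (measure_iUnion_le B).trans ?_
    refine le_trans (ENNReal.tsum_le_tsum hB) ?_
    rw [ENNReal.tsum_eq_iSup_sum]
    apply iSup_le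
    intro s
    have hsub : s ⊆ Finset.range (s.sup id + 1) := by
      intro j hj
      rw [Finset.mem_range, Nat.lt_succ_iff]
      exact Finset.le_sup (f := id) hj
    calc ∑ j ∈ s, ENNReal.ofReal (δ * tt j)
        ≤ ∑ j ∈ Finset.range (s.sup id + 1), ENNReal.ofReal (δ * tt j) :=
          Finset.sum_le_sum_of_subset hsub
      _ = ENNReal.ofReal (∑ j ∈ Finset.range (s.sup id + 1), δ * tt j) :=
          (ENNReal.ofReal_sum_of_nonneg
            (fun j _ => mul_nonneg hδ0.le (tt_nonneg j))).symm
      _ ≤ ENNReal.ofReal δ := by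
          apply ENNReal.ofReal_le_ofReal
          rw [← Finset.mul_sum]
          exact mul_le_of_le_one_right hδ0.le (sum_tt_le_one _)
  -- measurability of the bad set
  have hpSmeas : ∀ k, Measurable (pS X k) := by
    intro k
    by_cases hk : 1 ≤ k
    · exact ((pS_sm ℱ X hadapted k).mono (ℱ.le k)).measurable
    · have : k = 0 := by omega
      subst this
      have : pS X 0 = fun _ => (0:ℝ) := by funext ω; exact pS_zero X ω
      rw [this]
      exact measurable_const
  have hmeasB : ∀ j, MeasurableSet (B j) := by
    intro j
    have : B j = ⋃ k, ⋃ (_ : k ≤ epo (j+1)), {ω | ε j ≤ pS X k ω} := by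
      ext ω
      simp [hBdef, Set.mem_iUnion]
    rw [this]
    exact MeasurableSet.iUnion fun k => MeasurableSet.iUnion fun _ =>
      measurableSet_le measurable_const (hpSmeas k)
  have hmeasBad : MeasurableSet (⋃ j, B j) := MeasurableSet.iUnion hmeasB
  -- a.e. pointwise boundedness
  have hT : ∀ᵐ ω ∂μ, ∀ t, 1 ≤ t → |X t ω| ≤ ζ := by
    rw [MeasureTheory.ae_all_iff]
    intro t
    by_cases ht : 1 ≤ t
    · filter_upwards [hbdd t ht] with ω hω _ using hω
    · filter_upwards with ω h1 using absurd h1 ht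
  -- coverage: outside the bad set the desired bound holds for all N ≥ 2
  have hGood : ∀ᵐ ω ∂μ, ω ∈ (⋃ j, B j)ᶜ →
      ω ∈ {ω | ∀ N : ℕ, 2 ≤ N → ∑ t ∈ Finset.Icc 1 N, X t ω ≤
        2 * ζ * Real.sqrt (N * Real.log (6 * Real.log N / δ))} := by
    filter_upwards [hT] with ω hω hnot
    intro N hN2
    have hpS_eq : ∑ t ∈ Finset.Icc 1 N, X t ω = pS X N ω := rfl
    rw [hpS_eq]
    have hN0 : (0:ℝ) < N := by
      have : (2:ℝ) ≤ N := by exact_mod_cast hN2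
      linarith
    rcases le_or_gt N 10 with h10 | h10
    · -- small N : deterministic bound
      have hb : pS X N ω ≤ N * ζ := by
        calc pS X N ω ≤ |pS X N ω| := le_abs_self _
          _ ≤ ∑ t ∈ Finset.Icc 1 N, |X t ω| := Finset.abs_sum_le_sum_abs _ _
          _ ≤ ∑ t ∈ Finset.Icc 1 N, ζ :=
              Finset.sum_le_sum (fun t ht => hω t (Finset.mem_Icc.1 ht).1)
          _ ≤ N * ζ := by
              rw [Finset.sum_const, Nat.card_Icc]
              simp only [Nat.add_sub_cancel, nsmul_eq_mul]
              exact le_rfl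
      have hNL := smallN hδ0 hδ1 hN2 h10
      have hsq : (N:ℝ) / 2 ≤ Real.sqrt (N * Real.log (6 * Real.log N / δ)) := by
        rw [show ((N:ℝ)/2) = Real.sqrt (((N:ℝ)/2)^2) by
          rw [Real.sqrt_sq (by positivity)]]
        apply Real.sqrt_le_sqrt
        nlinarith
      calc pS X N ω ≤ N * ζ := hb
        _ ≤ 2 * ζ * Real.sqrt (N * Real.log (6 * Real.log N / δ)) := by
            nlinarith [hsq, hζ]
    · -- large N : use the epochs
      have h11 : 11 ≤ N := h10
      obtain ⟨j, hj1, hj2⟩ := epo_between h11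
      have hnotj : ω ∉ B j := by
        intro hmem
        exact hnot (Set.mem_iUnion.2 ⟨j, hmem⟩)
      have hlt : pS X N ω < ε j := by
        by_contra hcon
        push_neg at hcon
        exact hnotj ⟨N, le_of_lt hj2, hcon⟩
      refine (le_of_lt hlt).trans ?_
      -- ε j ≤ 2 ζ √(N L N) by monotonicity
      simp only [hεdef]
      apply mul_le_mul_of_nonneg_left _ (by linarith)
      apply Real.sqrt_le_sqrt
      have hcast : (epo j : ℝ) ≤ N := by exact_mod_cast hj1
      have hlogmono : Real.log (epo j) ≤ Real.log N := by
        rw [Real.log_le_log_iff (hepo_pos j) hN0]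
        exact hcast
      have hLmono : L (epo j) ≤ L N := by
        simp only [hLdef]
        have harg : 6 * Real.log (epo j) / δ ≤ 6 * Real.log N / δ :=
          (div_le_div_iff_of_pos_right hδ0).2 (by linarith)
        have hpos1 : 0 < 6 * Real.log (epo j) / δ :=
          div_pos (by nlinarith [log_epo_ge j]) hδ0
        have hpos2 : 0 < 6 * Real.log N / δ := lt_of_lt_of_le hpos1 harg
        exact (Real.log_le_log_iff hpos1 hpos2).2 harg
      exact mul_le_mul hcast hLmono (hLepo_nonneg j) hN0.le
  -- finish
  have hfinal : μ ((⋃ j, B j)ᶜ) ≤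
      μ {ω | ∀ N : ℕ, 2 ≤ N → ∑ t ∈ Finset.Icc 1 N, X t ω ≤
        2 * ζ * Real.sqrt (N * Real.log (6 * Real.log N / δ))} :=
    measure_mono_ae hGood
  refine le_trans ?_ hfinal
  rw [prob_compl_eq_one_sub hmeasBad]
  calc ENNReal.ofReal (1 - δ) = ENNReal.ofReal 1 - ENNReal.ofReal δ :=
        ENNReal.ofReal_sub 1 hδ0.le
    _ = 1 - ENNReal.ofReal δ := by rw [ENNReal.ofReal_one]
    _ ≤ 1 - μ (⋃ j, B j) := tsub_le_tsub_left hBad 1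
end

section
/- Let λ > 0 and let B, C ∈ ℝ^{d×d} be symmetric matrices with λI ⪯ C ⪯ B (so both are positive definite). If x ∈ ℝ^d is nonzero and satisfies ‖x‖_{C^{-1}} ≥ 2 ‖x‖_{B^{-1}}, then det(B) ≥ 4 · det(C). -/
open Matrix
open scoped MatrixOrder

section Aux

variable {n : Type*} [Fintype n] [DecidableEq n]

private lemma dot_left (A : Matrix n n ℝ) (hA : Aᵀ = A) (u v : n → ℝ) :
    (A *ᵥ u) ⬝ᵥ v = u ⬝ᵥ A *ᵥ v := by
  rw [dotProduct_comm, dotProduct_mulVec, ← mulVec_transpose, hA, dotProduct_comm]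

private lemma symm_dot (A : Matrix n n ℝ) (hA : Aᵀ = A) (u v : n → ℝ) :
    u ⬝ᵥ A *ᵥ v = v ⬝ᵥ A *ᵥ u := by
  rw [dotProduct_mulVec, ← mulVec_transpose, hA, dotProduct_comm]

private lemma transpose_of_psd {A : Matrix n n ℝ} (hA : A.PosSemidef) : Aᵀ = A := by
  have h := hA.isHermitian
  rwa [Matrix.IsHermitian, conjTranspose_eq_transpose_of_trivial] at h

/-- Cauchy–Schwarz for a positive semidefinite real matrix. -/
private lemma cs_psd {A : Matrix n n ℝ} (hA : A.PosSemidef) (u v : n → ℝ) :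
    (u ⬝ᵥ A *ᵥ v) ^ 2 ≤ (u ⬝ᵥ A *ᵥ u) * (v ⬝ᵥ A *ᵥ v) := by
  have hsym : Aᵀ = A := transpose_of_psd hA
  have key : ∀ t : ℝ, 0 ≤ (v ⬝ᵥ A *ᵥ v) * (t * t) + (2 * (u ⬝ᵥ A *ᵥ v)) * t
      + (u ⬝ᵥ A *ᵥ u) := by
    intro t
    have h0 := hA.dotProduct_mulVec_nonneg (u + t • v)
    simp only [star_trivial] at h0
    have expand : (u + t • v) ⬝ᵥ A *ᵥ (u + t • v)
        = (v ⬝ᵥ A *ᵥ v) * (t * t) + (2 * (u ⬝ᵥ A *ᵥ v)) * t + (u ⬝ᵥ A *ᵥ u) := by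
      have hvu : v ⬝ᵥ A *ᵥ u = u ⬝ᵥ A *ᵥ v := symm_dot A hsym v u
      simp only [mulVec_add, mulVec_smul, dotProduct_add, add_dotProduct,
        smul_dotProduct, dotProduct_smul, smul_eq_mul, hvu]
      ring
    rw [expand] at h0
    exact h0
  have hd := discrim_le_zero key
  rw [discrim] at hd
  nlinarith [hd]

/-- Quadratic form is bounded by trace times squared norm, for PSD matrices. -/
private lemma quad_le_trace {E : Matrix n n ℝ} (hE : E.PosSemidef) (y : n → ℝ) :
    y ⬝ᵥ E *ᵥ y ≤ E.trace * (y ⬝ᵥ y) := by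
  set F := CFC.sqrt E with hF
  have hFs : Fᵀ = F := transpose_of_psd (CFC.sqrt_nonneg E).posSemidef
  have hFF : F * F = E := CFC.sqrt_mul_sqrt_self E hE.nonneg
  have hFji : ∀ i j, F j i = F i j := fun i j => by
    have h := congrFun (congrFun hFs i) j
    simpa using h
  have h1 : y ⬝ᵥ E *ᵥ y = (F *ᵥ y) ⬝ᵥ (F *ᵥ y) := by
    rw [← hFF, ← mulVec_mulVec, dotProduct_mulVec, ← mulVec_transpose, hFs]
  have h2 : E.trace = ∑ i, ∑ j, F i j ^ 2 := by
    rw [← hFF, trace]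
    refine Finset.sum_congr rfl fun i _ => ?_
    rw [diag_apply, mul_apply]
    exact Finset.sum_congr rfl fun j _ => by rw [hFji i j]; ring
  have h3 : ∀ i, (F *ᵥ y) i ^ 2 ≤ (∑ j, F i j ^ 2) * (∑ j, y j ^ 2) := by
    intro i
    have := Finset.sum_mul_sq_le_sq_mul_sq Finset.univ (fun j => F i j) y
    simpa [mulVec, dotProduct] using this
  have hyy : y ⬝ᵥ y = ∑ j, y j ^ 2 := by simp [dotProduct, sq]
  calc y ⬝ᵥ E *ᵥ y = ∑ i, (F *ᵥ y) i ^ 2 := by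
        rw [h1]; simp [dotProduct, sq]
    _ ≤ ∑ i, (∑ j, F i j ^ 2) * (∑ j, y j ^ 2) := Finset.sum_le_sum fun i _ => h3 i
    _ = (∑ i, ∑ j, F i j ^ 2) * (∑ j, y j ^ 2) := by rw [Finset.sum_mul]
    _ = E.trace * (y ⬝ᵥ y) := by rw [h2, hyy]

private lemma one_add_sum_le_prod {ι : Type*} (s : Finset ι) (f : ι → ℝ)
    (hf : ∀ i ∈ s, 0 ≤ f i) : 1 + ∑ i ∈ s, f i ≤ ∏ i ∈ s, (1 + f i) := by
  induction s using Finset.cons_induction with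
  | empty => simp
  | cons a s ha ih =>
    rw [Finset.sum_cons, Finset.prod_cons]
    have h1 := ih fun i hi => hf i (Finset.mem_cons_of_mem hi)
    have h2 : 0 ≤ f a := hf a (Finset.mem_cons_self a s)
    have h3 : 0 ≤ ∑ i ∈ s, f i :=
      Finset.sum_nonneg fun i hi => hf i (Finset.mem_cons_of_mem hi)
    nlinarith

/-- `det (1 + E) ≥ 1 + trace E` for PSD `E`. -/
private lemma det_one_add_ge {E : Matrix n n ℝ} (hE : E.PosSemidef) :
    1 + E.trace ≤ (1 + E).det := by
  have hH := hE.isHermitian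
  set U : Matrix n n ℝ := (hH.eigenvectorUnitary : Matrix n n ℝ) with hU
  have hUU : U * star U = 1 := (Matrix.mem_unitaryGroup_iff).mp hH.eigenvectorUnitary.2
  have hUU' : star U * U = 1 := (Matrix.mem_unitaryGroup_iff').mp hH.eigenvectorUnitary.2
  set μ := hH.eigenvalues with hμ
  have hdiag : diagonal (RCLike.ofReal ∘ μ) = diagonal μ := by
    congr 1
  have hspec : E = U * diagonal μ * star U := by
    have := hH.spectral_theorem
    rwa [hdiag] at this
  have hone : (1 : Matrix n n ℝ) + E = U * (1 + diagonal μ) * star U := by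
    rw [mul_add, add_mul, mul_one, hUU, hspec]
  have hUdet : U.det * (star U).det = 1 := by rw [← det_mul, hUU, det_one]
  have hdet2 : (1 + E).det = (1 + diagonal μ).det := by
    rw [hone, det_mul, det_mul]
    calc U.det * (1 + diagonal μ).det * (star U).det
        = U.det * (star U).det * (1 + diagonal μ).det := by ring
      _ = (1 + diagonal μ).det := by rw [hUdet, one_mul]
  have htr : E.trace = ∑ i, μ i := by
    rw [hspec, Matrix.trace_mul_cycle, hUU', one_mul, trace_diagonal]
  have hd3 : (1 + diagonal μ).det = ∏ i, (1 + μ i) := by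
    rw [← diagonal_one, diagonal_add, det_diagonal]
  rw [hdet2, hd3, htr]
  exact one_add_sum_le_prod Finset.univ μ fun i _ => hE.eigenvalues_nonneg i

end Aux

/-- If `λI ⪯ C ⪯ B` (symmetric, hence positive definite) and the nonzero
vector `x` satisfies `‖x‖_{C⁻¹} ≥ 2 ‖x‖_{B⁻¹}`, then `det B ≥ 4 det C`. -/
theorem det_ge_four_of_inv_norm_doubled
    (d : ℕ) (lam : ℝ) (hlam : 0 < lam)
    (B C : Matrix (Fin d) (Fin d) ℝ)
    (hBsymm : B.IsSymm) (hCsymm : C.IsSymm)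
    (hlow : (C - lam • (1 : Matrix (Fin d) (Fin d) ℝ)).PosSemidef)
    (hCB : (B - C).PosSemidef)
    (x : Fin d → ℝ) (hx : x ≠ 0)
    (hnorm : 2 * Real.sqrt (x ⬝ᵥ B⁻¹.mulVec x) ≤ Real.sqrt (x ⬝ᵥ C⁻¹.mulVec x)) :
    4 * C.det ≤ B.det := by
  classical
  -- positive definiteness of C and B
  have hlamI : (lam • (1 : Matrix (Fin d) (Fin d) ℝ)).PosDef := by
    rw [smul_one_eq_diagonal]
    exact .diagonal fun _ => hlam
  have hC : C.PosDef := by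
    have h := Matrix.PosDef.posSemidef_add hlow hlamI
    have e : C - lam • (1 : Matrix (Fin d) (Fin d) ℝ)
        + lam • (1 : Matrix (Fin d) (Fin d) ℝ) = C := by abel
    rwa [e] at h
  have hB : B.PosDef := by
    have h := hC.add_posSemidef hCB
    have e : C + (B - C) = B := by abel
    rwa [e] at h
  have hdetC : 0 < C.det := hC.det_pos
  have hdetB : 0 < B.det := hB.det_pos
  have hCinv : C * C⁻¹ = 1 := mul_nonsing_inv _ hdetC.ne'.isUnit
  have hBinv : B * B⁻¹ = 1 := mul_nonsing_inv _ hdetB.ne'.isUnit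
  set s := x ⬝ᵥ C⁻¹ *ᵥ x with hsdef
  set t := x ⬝ᵥ B⁻¹ *ᵥ x with htdef
  have hs : 0 < s := by
    have := (hC.inv).dotProduct_mulVec_pos hx
    simpa [star_trivial] using this
  have ht : 0 < t := by
    have := (hB.inv).dotProduct_mulVec_pos hx
    simpa [star_trivial] using this
  have hst : 4 * t ≤ s := by
    nlinarith [Real.sq_sqrt ht.le, Real.sq_sqrt hs.le, Real.sqrt_nonneg t,
      Real.sqrt_nonneg s, hnorm]
  set z := C⁻¹ *ᵥ x with hz
  have hCz : C *ᵥ z = x := by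
    rw [hz, mulVec_mulVec, hCinv, one_mulVec]
  have hzx : z ⬝ᵥ x = s := by rw [hz, dotProduct_comm]
  have hzCz : z ⬝ᵥ C *ᵥ z = s := by rw [hCz, hzx]
  -- Cauchy–Schwarz: s² ≤ (zᵀBz)·t
  have hBBx : B *ᵥ (B⁻¹ *ᵥ x) = x := by
    rw [mulVec_mulVec, hBinv, one_mulVec]
  have hcs := cs_psd hB.posSemidef z (B⁻¹ *ᵥ x)
  rw [hBBx] at hcs
  have h4 : (B⁻¹ *ᵥ x) ⬝ᵥ x = t := by rw [dotProduct_comm]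
  rw [hzx, h4] at hcs
  -- zᵀBz ≥ 4s
  have hq : 4 * s ≤ z ⬝ᵥ B *ᵥ z := by nlinarith
  have hzDz : 3 * s ≤ z ⬝ᵥ (B - C) *ᵥ z := by
    rw [sub_mulVec, dotProduct_sub, hzCz]; linarith
  -- square root of C
  set S := CFC.sqrt C with hS
  have hSps : S.PosSemidef := (CFC.sqrt_nonneg C).posSemidef
  have hSsym : Sᵀ = S := transpose_of_psd hSps
  have hSH : Sᴴ = S := hSps.isHermitian
  have hSS : S * S = C := CFC.sqrt_mul_sqrt_self C hC.posSemidef.nonneg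
  have hdetS : S.det * S.det = C.det := by rw [← det_mul, hSS]
  have hdetSne : S.det ≠ 0 := by
    intro h
    rw [h, mul_zero] at hdetS
    exact hdetC.ne' hdetS.symm
  have hSinv : S * S⁻¹ = 1 := mul_nonsing_inv _ hdetSne.isUnit
  have hSinv' : S⁻¹ * S = 1 := nonsing_inv_mul _ hdetSne.isUnit
  set E := S⁻¹ * (B - C) * S⁻¹ with hE
  have hEpsd : E.PosSemidef := by
    have h := hCB.conjTranspose_mul_mul_same (S⁻¹)
    rwa [conjTranspose_nonsing_inv, hSH] at h
  have hdecomp : B = S * (1 + E) * S := by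
    have e1 : S * (1 + E) * S
        = S * S + (S * S⁻¹) * (B - C) * (S⁻¹ * S) := by
      rw [hE]; noncomm_ring
    rw [e1, hSinv, hSinv', one_mul, mul_one, hSS]
    abel
  have hdetBE : B.det = C.det * (1 + E).det := by
    rw [hdecomp, det_mul, det_mul, ← hdetS]; ring
  -- trace bound
  set y := S *ᵥ z with hy
  have hyy : y ⬝ᵥ y = s := by
    rw [hy, dot_left S hSsym, mulVec_mulVec, hSS, hzCz]
  have hSES : S * E * S = B - C := by
    rw [hE]
    calc S * (S⁻¹ * (B - C) * S⁻¹) * S = (S * S⁻¹) * (B - C) * (S⁻¹ * S) := by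
          noncomm_ring
      _ = B - C := by rw [hSinv, hSinv', one_mul, mul_one]
  have hEy : y ⬝ᵥ E *ᵥ y = z ⬝ᵥ (B - C) *ᵥ z := by
    rw [hy, dot_left S hSsym, mulVec_mulVec, mulVec_mulVec, hSES]
  have htr : 3 ≤ E.trace := by
    have h5 := quad_le_trace hEpsd y
    rw [hEy, hyy] at h5
    nlinarith
  have hdet1 : 4 ≤ (1 + E).det := by
    have := det_one_add_ge hEpsd
    linarith
  calc 4 * C.det ≤ (1 + E).det * C.det := by nlinarith
    _ = B.det := by rw [hdetBE]; ring
end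

section
/- Fix P, d, d' ∈ ℕ and constants W ≥ 0, γ ≥ 0. For each p ∈ [P], let Σ^{(p)} ∈ ℝ^{d×d} be positive definite, let φ^{(p)} ∈ ℝ^d, let M̄^{(p)}, M̃^{(p)}, M_⋆^{(p)} ∈ ℝ^{d×d'}, and let w^{(p)} ∈ ℝ^{d'} with ‖w^{(p)}‖₂ ≤ W. Assume ∑_{p=1}^{P} ‖(Σ^{(p)})^{1/2}( M̄^{(p)} − M̃^{(p)} )‖_F² ≤ γ and ∑_{p=1}^{P} ‖(Σ^{(p)})^{1/2}( M_⋆^{(p)} − M̃^{(p)} )‖_F² ≤ γ. Then ∑_{p=1}^{P} (φ^{(p)})ᵀ ( M̄^{(p)} − M_⋆^{(p)} ) w^{(p)} ≤ 2 W √( γ · ∑_{p=1}^{P} ‖φ^{(p)}‖²_{(Σ^{(p)})^{-1}} ). -/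
open Matrix

/-- Cauchy–Schwarz for a bilinear form: `|u ⬝ᵥ B *ᵥ w| ≤ ‖B‖_F ‖u‖ ‖w‖`. -/
lemma abs_dotProduct_mulVec_le {d d' : ℕ} (u : Fin d → ℝ) (B : Matrix (Fin d) (Fin d') ℝ)
    (w : Fin d' → ℝ) :
    |u ⬝ᵥ B.mulVec w| ≤ Real.sqrt (∑ i, ∑ j, (B i j) ^ 2) *
      (Real.sqrt (u ⬝ᵥ u) * Real.sqrt (w ⬝ᵥ w)) := by
  have key : ∀ v : Fin d → ℝ, v ⬝ᵥ B.mulVec w ≤ Real.sqrt (∑ i, ∑ j, (B i j) ^ 2) *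
      (Real.sqrt (v ⬝ᵥ v) * Real.sqrt (w ⬝ᵥ w)) := by
    intro v
    have h0 : v ⬝ᵥ B.mulVec w = ∑ q : Fin d × Fin d', B q.1 q.2 * (v q.1 * w q.2) := by
      rw [Fintype.sum_prod_type]
      simp only [dotProduct, Matrix.mulVec, dotProduct, Finset.mul_sum]
      exact Finset.sum_congr rfl fun i _ => Finset.sum_congr rfl fun j _ => by ring
    rw [h0]
    have h := Real.sum_mul_le_sqrt_mul_sqrt Finset.univ (fun q : Fin d × Fin d' => B q.1 q.2)
      (fun q : Fin d × Fin d' => v q.1 * w q.2)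
    refine h.trans_eq ?_
    congr 1
    · congr 1; rw [Fintype.sum_prod_type]
    · have hv : (0:ℝ) ≤ v ⬝ᵥ v := Finset.sum_nonneg fun i _ => mul_self_nonneg _
      rw [← Real.sqrt_mul hv]
      congr 1
      rw [Fintype.sum_prod_type]
      simp only [dotProduct, Finset.sum_mul_sum]
      exact Finset.sum_congr rfl fun i _ => Finset.sum_congr rfl fun j _ => by ring
  rw [abs_le]
  refine ⟨?_, key u⟩
  have h := key (-u)
  rw [neg_dotProduct, neg_dotProduct, dotProduct_neg, neg_neg] at h
  linarith

lemma posDef_sqrt_aux (d : ℕ) (Sig : Matrix (Fin d) (Fin d) ℝ) (h : Sig.PosDef) :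
    (h.isHermitian.eigenvectorUnitary.1 * diagonal (Real.sqrt ∘ h.isHermitian.eigenvalues) *
      (star h.isHermitian.eigenvectorUnitary : Matrix (Fin d) (Fin d) ℝ)) *
    (h.isHermitian.eigenvectorUnitary.1 * diagonal (Real.sqrt ∘ h.isHermitian.eigenvalues) *
      (star h.isHermitian.eigenvectorUnitary : Matrix (Fin d) (Fin d) ℝ)) = Sig ∧
    (h.isHermitian.eigenvectorUnitary.1 * diagonal (Real.sqrt ∘ h.isHermitian.eigenvalues) *
      (star h.isHermitian.eigenvectorUnitary : Matrix (Fin d) (Fin d) ℝ))ᵀ =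
    (h.isHermitian.eigenvectorUnitary.1 * diagonal (Real.sqrt ∘ h.isHermitian.eigenvalues) *
      (star h.isHermitian.eigenvectorUnitary : Matrix (Fin d) (Fin d) ℝ)) := by
  constructor
  · have hU := Matrix.UnitaryGroup.star_mul_self h.isHermitian.eigenvectorUnitary
    have hD : diagonal (Real.sqrt ∘ h.isHermitian.eigenvalues) *
        diagonal (Real.sqrt ∘ h.isHermitian.eigenvalues)
        = diagonal (RCLike.ofReal ∘ h.isHermitian.eigenvalues) := by
      rw [diagonal_mul_diagonal]; congr 1; funext i
      simp [Real.mul_self_sqrt (h.posSemidef.eigenvalues_nonneg i)]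
    conv_rhs => rw [h.isHermitian.spectral_theorem, Unitary.conjStarAlgAut_apply]
    rw [← hD]
    simp only [Matrix.mul_assoc]
    rw [← Matrix.mul_assoc (star _) _ _]
    rw [hU, Matrix.one_mul]
  · simp only [transpose_mul, diagonal_transpose, Matrix.star_eq_conjTranspose,
      conjTranspose_eq_transpose_of_trivial, transpose_transpose, Matrix.mul_assoc]

/-- algebraic core of the multitask Bellman-error bound. If for each task
`p` the matrices `M̄^{(p)}` and `M_⋆^{(p)}` both lie in the confidence set of radius `γ`
around `M̃^{(p)}` (measured by `∑_p ‖(Σ^{(p)})^{1/2}(· − M̃^{(p)})‖_F² ≤ γ`) and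
`‖w^{(p)}‖₂ ≤ W`, then
`∑_p (φ^{(p)})ᵀ(M̄^{(p)} − M_⋆^{(p)}) w^{(p)} ≤ 2W √(γ ∑_p ‖φ^{(p)}‖²_{(Σ^{(p)})⁻¹})`. -/
theorem multitask_bellman_error_core
    (P d d' : ℕ) (W γ : ℝ) (hW : 0 ≤ W) (hγ : 0 ≤ γ)
    (Sig : Fin P → Matrix (Fin d) (Fin d) ℝ) (hSig : ∀ p, (Sig p).PosDef)
    (φ : Fin P → Fin d → ℝ)
    (Mbar Mt Mstar : Fin P → Matrix (Fin d) (Fin d') ℝ)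
    (w : Fin P → Fin d' → ℝ)
    (hw : ∀ p, Real.sqrt (w p ⬝ᵥ w p) ≤ W)
    (h1 : ∑ p : Fin P, ∑ i : Fin d, ∑ j : Fin d',
        (((hSig p).isHermitian.eigenvectorUnitary.1 *
          diagonal (Real.sqrt ∘ (hSig p).isHermitian.eigenvalues) *
          (star (hSig p).isHermitian.eigenvectorUnitary : Matrix (Fin d) (Fin d) ℝ) *
          (Mbar p - Mt p)) i j) ^ 2 ≤ γ)
    (h2 : ∑ p : Fin P, ∑ i : Fin d, ∑ j : Fin d',
        (((hSig p).isHermitian.eigenvectorUnitary.1 *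
          diagonal (Real.sqrt ∘ (hSig p).isHermitian.eigenvalues) *
          (star (hSig p).isHermitian.eigenvectorUnitary : Matrix (Fin d) (Fin d) ℝ) *
          (Mstar p - Mt p)) i j) ^ 2 ≤ γ) :
    ∑ p : Fin P, φ p ⬝ᵥ (Mbar p - Mstar p).mulVec (w p)
      ≤ 2 * W * Real.sqrt (γ * ∑ p : Fin P, φ p ⬝ᵥ ((Sig p)⁻¹).mulVec (φ p)) := by
  -- notation
  set S : Fin P → Matrix (Fin d) (Fin d) ℝ := fun p =>
    (hSig p).isHermitian.eigenvectorUnitary.1 *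
      diagonal (Real.sqrt ∘ (hSig p).isHermitian.eigenvalues) *
      (star (hSig p).isHermitian.eigenvectorUnitary : Matrix (Fin d) (Fin d) ℝ) with hS
  have hSS : ∀ p, S p * S p = Sig p := fun p => (posDef_sqrt_aux d (Sig p) (hSig p)).1
  have hsym : ∀ p, (S p)ᵀ = S p := by
    intro p
    exact (posDef_sqrt_aux d (Sig p) (hSig p)).2
  have hdet : ∀ p, IsUnit (S p).det := by
    intro p
    have hA : IsUnit (Sig p).det := (hSig p).det_pos.ne'.isUnit
    rw [← hSS p, Matrix.det_mul] at hA
    exact isUnit_of_mul_isUnit_left hA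
  have hSinv_sym : ∀ p, ((S p)⁻¹)ᵀ = (S p)⁻¹ := by
    intro p; rw [Matrix.transpose_nonsing_inv, hsym]
  have hSiginv : ∀ p, (Sig p)⁻¹ = (S p)⁻¹ * (S p)⁻¹ := by
    intro p; rw [← hSS p, Matrix.mul_inv_rev]
  set u : Fin P → Fin d → ℝ := fun p => ((S p)⁻¹).mulVec (φ p) with hu
  -- rewrite φ ⬝ᵥ A w = u ⬝ᵥ (S A) w
  have key : ∀ p (A : Matrix (Fin d) (Fin d') ℝ),
      φ p ⬝ᵥ A.mulVec (w p) = u p ⬝ᵥ (S p * A).mulVec (w p) := by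
    intro p A
    rw [← Matrix.mulVec_mulVec, Matrix.dotProduct_mulVec (u p) (S p),
      ← Matrix.mulVec_transpose, hsym, hu]
    simp only [Matrix.mulVec_mulVec]
    rw [Matrix.mul_nonsing_inv _ (hdet p), Matrix.one_mulVec]
  -- ‖u p‖² = φ Σ⁻¹ φ
  have hnorm_u : ∀ p, u p ⬝ᵥ u p = φ p ⬝ᵥ ((Sig p)⁻¹).mulVec (φ p) := by
    intro p
    rw [hu]
    rw [Matrix.dotProduct_mulVec, ← Matrix.mulVec_transpose, hSinv_sym,
      Matrix.mulVec_mulVec, ← hSiginv, dotProduct_comm]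
  -- nonneg quantities
  have hq : ∀ p, (0:ℝ) ≤ φ p ⬝ᵥ ((Sig p)⁻¹).mulVec (φ p) := by
    intro p
    rw [← hnorm_u p]
    exact Finset.sum_nonneg fun i _ => mul_self_nonneg _
  have hF1 : ∀ p, (0:ℝ) ≤ ∑ i, ∑ j, ((S p * (Mbar p - Mt p)) i j) ^ 2 := by
    intro p; positivity
  have hF2 : ∀ p, (0:ℝ) ≤ ∑ i, ∑ j, ((S p * (Mstar p - Mt p)) i j) ^ 2 := by
    intro p; positivity
  -- bound one family of terms
  have main : ∀ (X : Fin P → Matrix (Fin d) (Fin d') ℝ),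
      (∑ p, ∑ i, ∑ j, ((S p * (X p - Mt p)) i j) ^ 2 ≤ γ) →
      ∑ p, |φ p ⬝ᵥ (X p - Mt p).mulVec (w p)|
        ≤ W * Real.sqrt (γ * ∑ p, φ p ⬝ᵥ ((Sig p)⁻¹).mulVec (φ p)) := by
    intro X hX
    have step1 : ∑ p, |φ p ⬝ᵥ (X p - Mt p).mulVec (w p)|
        ≤ ∑ p, W * (Real.sqrt (∑ i, ∑ j, ((S p * (X p - Mt p)) i j) ^ 2) *
            Real.sqrt (φ p ⬝ᵥ ((Sig p)⁻¹).mulVec (φ p))) := by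
      refine Finset.sum_le_sum fun p _ => ?_
      rw [key p]
      refine (abs_dotProduct_mulVec_le _ _ _).trans ?_
      rw [hnorm_u p]
      have hwp : Real.sqrt (w p ⬝ᵥ w p) ≤ W := hw p
      have h1' : (0:ℝ) ≤ Real.sqrt (∑ i, ∑ j, ((S p * (X p - Mt p)) i j) ^ 2) :=
        Real.sqrt_nonneg _
      have h2' : (0:ℝ) ≤ Real.sqrt (φ p ⬝ᵥ ((Sig p)⁻¹).mulVec (φ p)) := Real.sqrt_nonneg _
      have h3' : (0:ℝ) ≤ Real.sqrt (w p ⬝ᵥ w p) := Real.sqrt_nonneg _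
      nlinarith [mul_nonneg h1' h2']
    refine step1.trans ?_
    rw [← Finset.mul_sum]
    refine mul_le_mul_of_nonneg_left ?_ hW
    have cs := Real.sum_sqrt_mul_sqrt_le (f := fun p => ∑ i, ∑ j, ((S p * (X p - Mt p)) i j) ^ 2)
      (g := fun p => φ p ⬝ᵥ ((Sig p)⁻¹).mulVec (φ p)) Finset.univ (fun p => by positivity) hq
    beta_reduce at cs
    refine cs.trans ?_
    refine le_trans (mul_le_mul_of_nonneg_right (Real.sqrt_le_sqrt hX) (Real.sqrt_nonneg _)) ?_
    rw [← Real.sqrt_mul hγ]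
  -- assemble
  have split : ∑ p : Fin P, φ p ⬝ᵥ (Mbar p - Mstar p).mulVec (w p)
      = ∑ p, (φ p ⬝ᵥ (Mbar p - Mt p).mulVec (w p) - φ p ⬝ᵥ (Mstar p - Mt p).mulVec (w p)) := by
    refine Finset.sum_congr rfl fun p _ => ?_
    have : Mbar p - Mstar p = (Mbar p - Mt p) - (Mstar p - Mt p) :=
      (sub_sub_sub_cancel_right _ _ _).symm
    rw [this, Matrix.sub_mulVec, dotProduct_sub]
  rw [split, Finset.sum_sub_distrib]
  have b1 := main Mbar h1
  have b2 := main Mstar h2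
  have l1 : ∑ p, φ p ⬝ᵥ (Mbar p - Mt p).mulVec (w p)
      ≤ ∑ p, |φ p ⬝ᵥ (Mbar p - Mt p).mulVec (w p)| :=
    Finset.sum_le_sum fun p _ => le_abs_self _
  have l2 : -(∑ p, φ p ⬝ᵥ (Mstar p - Mt p).mulVec (w p))
      ≤ ∑ p, |φ p ⬝ᵥ (Mstar p - Mt p).mulVec (w p)| := by
    rw [← Finset.sum_neg_distrib]
    exact Finset.sum_le_sum fun p _ => neg_le_abs _
  linarith
end
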